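/- arXiv:2310.02483 — 11 statements merged into one kernel-verified Lean document; each statement's English description precedes it below -/
import Mathlib

section
/- For every integer n ≥ 1, the identity ∑_{q=0}^{n-1} 2^q · C(2n−1−q, q) = (4^n − 1)/3 holds; equivalently, 3·∑_{q=0}^{n-1} 2^q · C(2n−1−q, q) = 4^n − 1. -/
private def J (m : ℕ) : ℕ := ∑ q ∈ Finset.range (m+1), 2 ^ q * Nat.choose (m - q) q

private lemma choose_aux (m q : ℕ) (hq : q ≤ m + 1) :
    Nat.choose (m + 1 - q) (q+1) = Nat.choose (m - q) q + Nat.choose (m - q) (q+1) := by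
  rcases Nat.lt_or_ge q (m+1) with h | h
  · have hq' : q ≤ m := Nat.lt_succ_iff.mp h
    rw [Nat.succ_sub hq', Nat.choose_succ_succ]
  · have hqe : q = m + 1 := le_antisymm hq h
    subst hqe
    simp [Nat.choose_eq_zero_of_lt]

private lemma J_rec (m : ℕ) : J (m+2) = J (m+1) + 2 * J m := by
  have h1 : J (m+2) =
      (∑ q ∈ Finset.range (m+2), 2 ^ (q+1) * Nat.choose (m + 1 - q) (q+1)) + 1 := by
    unfold J
    rw [Finset.sum_range_succ']
    simp [Nat.succ_sub_succ]
  have h2 : ∀ q ∈ Finset.range (m+2),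
      2 ^ (q+1) * Nat.choose (m + 1 - q) (q+1) =
      2 * (2 ^ q * Nat.choose (m - q) q) + 2 ^ (q+1) * Nat.choose (m - q) (q+1) := by
    intro q hq
    rw [choose_aux m q (by simpa using Nat.lt_succ_iff.mp (Finset.mem_range.mp hq))]
    ring
  rw [h1, Finset.sum_congr rfl h2, Finset.sum_add_distrib, ← Finset.mul_sum]
  have h3 : (∑ q ∈ Finset.range (m+2), 2 ^ q * Nat.choose (m - q) q) = J m := by
    unfold J
    rw [Finset.sum_range_succ]
    simp [Nat.choose_eq_zero_of_lt]
  have h4 : (∑ q ∈ Finset.range (m+2), 2 ^ (q+1) * Nat.choose (m - q) (q+1)) + 1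
      = J (m+1) := by
    unfold J
    rw [Finset.sum_range_succ' (fun q => 2 ^ q * Nat.choose (m + 1 - q) q) (m+1)]
    rw [Finset.sum_range_succ]
    simp [Nat.succ_sub_succ, Nat.choose_eq_zero_of_lt]
  rw [h3]
  omega

private lemma J_closed (k : ℕ) :
    3 * J (2*k) = 2^(2*k+1) + 1 ∧ 3 * J (2*k+1) = 2^(2*k+2) - 1 := by
  induction k with
  | zero => decide
  | succ k ih =>
    obtain ⟨h1, h2⟩ := ih
    have e1 : 2*(k+1) = (2*k) + 2 := by ring
    have e2 : 2*(k+1)+1 = (2*k+1) + 2 := by ring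
    have r1 := J_rec (2*k)
    have r2 := J_rec (2*k+1)
    have hp : 1 ≤ 2^(2*k+1) := Nat.one_le_two_pow
    have hp2 : 2^(2*k+2) = 2 * 2^(2*k+1) := by ring
    have hp3 : 2^(2*k+3) = 4 * 2^(2*k+1) := by ring
    have hp4 : 2^(2*k+4) = 8 * 2^(2*k+1) := by ring
    have g1 : 3 * J (2*k+2) = 2^(2*k+3) + 1 := by rw [r1]; omega
    have g2 : 3 * J (2*k+3) = 2^(2*k+4) - 1 := by
      rw [show 2*k+3 = 2*k+1+2 by ring, r2, show 2*k+1+1 = 2*k+2 by ring]; omega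
    constructor
    · calc 3 * J (2*(k+1)) = 3 * J (2*k+2) := by rw [e1]
        _ = 2^(2*k+3) + 1 := g1
        _ = 2^(2*(k+1)+1) + 1 := by ring_nf
    · calc 3 * J (2*(k+1)+1) = 3 * J (2*k+3) := by rw [show 2*(k+1)+1 = 2*k+3 by ring]
        _ = 2^(2*k+4) - 1 := g2
        _ = 2^(2*(k+1)+2) - 1 := by rw [show 2*(k+1)+2 = 2*k+4 by ring]

/-- Lemma 2.2 (first identity): for every `n ≥ 1`,
`3 * ∑_{q=0}^{n-1} 2^q * C(2n-1-q, q) = 4^n - 1`. -/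
theorem sum_two_pow_mul_choose (n : ℕ) (hn : 1 ≤ n) :
    3 * ∑ q ∈ Finset.range n, 2 ^ q * Nat.choose (2 * n - 1 - q) q = 4 ^ n - 1 := by
  have hsum : (∑ q ∈ Finset.range n, 2 ^ q * Nat.choose (2 * n - 1 - q) q)
      = J (2 * n - 1) := by
    unfold J
    have hr : 2 * n - 1 + 1 = 2 * n := by omega
    rw [hr]
    refine Finset.sum_subset ?_ ?_
    · exact Finset.range_subset_range.mpr (by omega)
    · intro q hq hq'
      have h1 : n ≤ q := by
        simp only [Finset.mem_range, not_lt] at hq'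
        exact hq'
      have h2 : 2 * n - 1 - q < q := by omega
      simp [Nat.choose_eq_zero_of_lt h2]
  rw [hsum]
  obtain ⟨k, rfl⟩ : ∃ k, n = k + 1 := ⟨n - 1, by omega⟩
  have h : 2 * (k+1) - 1 = 2*k + 1 := by omega
  rw [h]
  have := (J_closed k).2
  have h4 : (4:ℕ)^(k+1) = 2^(2*k+2) := by rw [show (4:ℕ) = 2^2 by norm_num, ← pow_mul]; ring_nf
  omega
end

section
/- For every integer n ≥ 1, the identity ∑_{q=0}^{n} 2^q · C(2n−q, q) = (2·4^n + 1)/3 holds; equivalently, 3·∑_{q=0}^{n} 2^q · C(2n−q, q) = 2·4^n + 1. -/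
private def g (m : ℕ) : ℕ := ∑ q ∈ Finset.range (m + 1), 2 ^ q * Nat.choose (m - q) q

private lemma g_rec (m : ℕ) : g (m + 2) = g (m + 1) + 2 * g m := by
  unfold g
  rw [Finset.sum_range_succ' (fun q => 2 ^ q * Nat.choose (m + 2 - q) q) (m + 2)]
  have hterm : ∀ i ∈ Finset.range (m + 2),
      2 ^ (i+1) * Nat.choose (m + 2 - (i+1)) (i+1)
        = 2 ^ (i+1) * Nat.choose (m - i) (i+1) + 2 ^ (i+1) * Nat.choose (m - i) i := by
    intro i hi
    simp only [Finset.mem_range] at hi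
    rcases Nat.lt_or_ge i (m+1) with h | h
    · have : m + 2 - (i+1) = (m - i) + 1 := by omega
      rw [this, Nat.choose_succ_succ, Nat.add_comm (Nat.choose (m-i) i), Nat.mul_add]
    · have hi' : i = m + 1 := by omega
      subst hi'
      have h1 : m + 2 - (m + 1 + 1) = 0 := by omega
      have h2 : m - (m+1) = 0 := by omega
      rw [h1, h2]
      simp
  rw [Finset.sum_congr rfl hterm, Finset.sum_add_distrib]
  rw [Finset.sum_range_succ (fun i => 2 ^ (i+1) * Nat.choose (m - i) (i+1)) (m+1),
    Finset.sum_range_succ (fun i => 2 ^ (i+1) * Nat.choose (m - i) i) (m+1)]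
  have hz : m - (m+1) = 0 := by omega
  rw [hz, Nat.choose_eq_zero_of_lt (by omega : 0 < m + 2),
    Nat.choose_eq_zero_of_lt (by omega : 0 < m + 1)]
  have hg1 : ∑ q ∈ Finset.range (m+1+1), 2 ^ q * Nat.choose (m + 1 - q) q
      = (∑ i ∈ Finset.range (m+1), 2 ^ (i+1) * Nat.choose (m - i) (i+1)) + 1 := by
    rw [Finset.sum_range_succ' (fun q => 2 ^ q * Nat.choose (m + 1 - q) q) (m + 1)]
    simp only [Nat.choose_zero_right, pow_zero, one_mul]
    congr 1
    refine Finset.sum_congr rfl fun i hi => ?_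
    simp only [Finset.mem_range] at hi
    have : m + 1 - (i+1) = m - i := by omega
    rw [this]
  have hg0 : 2 * ∑ q ∈ Finset.range (m+1), 2 ^ q * Nat.choose (m - q) q
      = ∑ i ∈ Finset.range (m+1), 2 ^ (i+1) * Nat.choose (m - i) i := by
    rw [Finset.mul_sum]
    refine Finset.sum_congr rfl fun i hi => ?_
    ring
  rw [hg1, hg0.symm]
  simp
  ring

private lemma key : ∀ m : ℕ, 3 * (g m : ℤ) = 2 ^ (m + 1) + (-1) ^ m := by
  intro m
  induction m using Nat.twoStepInduction with
  | zero => decide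
  | one => decide
  | more m ih1 ih2 =>
    have := g_rec m
    push_cast [this]
    push_cast at ih1 ih2
    ring_nf
    ring_nf at ih1 ih2
    nlinarith [ih1, ih2]

/-- Lemma 2.2 (second identity): for every `n ≥ 1`,
`3 * ∑_{q=0}^{n} 2^q * C(2n-q, q) = 2 * 4^n + 1`. -/
theorem sum_two_pow_mul_choose' (n : ℕ) (hn : 1 ≤ n) :
    3 * ∑ q ∈ Finset.range (n + 1), 2 ^ q * Nat.choose (2 * n - q) q = 2 * 4 ^ n + 1 := by
  have hsum : ∑ q ∈ Finset.range (n + 1), 2 ^ q * Nat.choose (2 * n - q) q = g (2 * n) := by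
    unfold g
    refine Finset.sum_subset ?_ ?_
    · intro x hx
      simp only [Finset.mem_range] at hx ⊢
      omega
    · intro x hx hx'
      simp only [Finset.mem_range] at hx hx'
      rw [Nat.choose_eq_zero_of_lt (by omega), Nat.mul_zero]
  rw [hsum]
  have h := key (2 * n)
  have h2 : ((-1 : ℤ)) ^ (2 * n) = 1 := by
    rw [pow_mul]; norm_num
  have h3 : (2 : ℤ) ^ (2 * n + 1) = 2 * 4 ^ n := by
    rw [pow_succ, pow_mul]; ring
  rw [h2, h3] at h
  exact_mod_cast h
end

section
/- For every integer n ≥ 1, the identity ∑_{q=0}^{n-1} q · 2^q · C(2n−1−q, q) = (2/27)·((3n−2)·4^n − 6n + 2) holds; equivalently, 27·∑_{q=0}^{n-1} q · 2^q · C(2n−1−q, q) = 2·((3n−2)·4^n − 6n + 2). -/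
private def auxF (m : ℕ) : ℤ := ∑ q ∈ Finset.range (m + 1), 2 ^ q * (Nat.choose (m - q) q : ℤ)

private def auxG (m : ℕ) : ℤ :=
  ∑ q ∈ Finset.range (m + 1), (q : ℤ) * 2 ^ q * (Nat.choose (m - q) q : ℤ)

private lemma auxF_zero : auxF 0 = 1 := by decide
private lemma auxF_one : auxF 1 = 1 := by decide
private lemma auxG_zero : auxG 0 = 0 := by decide
private lemma auxG_one : auxG 1 = 0 := by decide

private lemma auxF_rec (m : ℕ) : auxF (m + 2) = auxF (m + 1) + 2 * auxF m := by
  have h2 : auxF (m + 2)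
      = 1 + ∑ q ∈ Finset.range (m + 1),
          2 ^ (q + 1) * ((Nat.choose (m - q) q : ℤ) + (Nat.choose (m - q) (q + 1) : ℤ)) := by
    unfold auxF
    rw [Finset.sum_range_succ]
    have : Nat.choose (m + 2 - (m + 2)) (m + 2) = 0 := by
      simp [Nat.choose_eq_zero_of_lt]
    rw [this]
    rw [Finset.sum_range_succ']
    simp only [Nat.cast_zero, pow_zero, Nat.sub_zero, Nat.choose_zero_right, Nat.cast_one,
      mul_one, mul_zero, add_zero, Nat.cast_ofNat]
    rw [add_comm]
    congr 1
    apply Finset.sum_congr rfl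
    intro q hq
    have hqm : q ≤ m := Nat.lt_succ_iff.mp (Finset.mem_range.mp hq)
    have hsub : m + 2 - (q + 1) = (m - q) + 1 := by omega
    rw [hsub, Nat.choose_succ_succ]
    push_cast
    ring
  have h1 : auxF (m + 1)
      = 1 + ∑ q ∈ Finset.range (m + 1), 2 ^ (q + 1) * (Nat.choose (m - q) (q + 1) : ℤ) := by
    unfold auxF
    rw [Finset.sum_range_succ']
    simp only [Nat.sub_zero, Nat.choose_zero_right, Nat.cast_one, pow_zero, mul_one]
    rw [add_comm]
    congr 1
    apply Finset.sum_congr rfl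
    intro q hq
    have hqm : q ≤ m := Nat.lt_succ_iff.mp (Finset.mem_range.mp hq)
    have hsub : m + 1 - (q + 1) = m - q := by omega
    rw [hsub]
  rw [h2, h1]
  unfold auxF
  rw [Finset.mul_sum, add_assoc, ← Finset.sum_add_distrib]
  congr 1
  apply Finset.sum_congr rfl
  intro q hq
  ring

private lemma auxG_rec (m : ℕ) : auxG (m + 2) = auxG (m + 1) + 2 * auxG m + 2 * auxF m := by
  have h2 : auxG (m + 2)
      = ∑ q ∈ Finset.range (m + 1),
          ((q : ℤ) + 1) * 2 ^ (q + 1) * ((Nat.choose (m - q) q : ℤ) + (Nat.choose (m - q) (q + 1) : ℤ)) := by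
    unfold auxG
    rw [Finset.sum_range_succ]
    have : Nat.choose (m + 2 - (m + 2)) (m + 2) = 0 := by
      simp [Nat.choose_eq_zero_of_lt]
    rw [this]
    rw [Finset.sum_range_succ']
    simp only [Nat.cast_zero, zero_mul, mul_zero, add_zero, Nat.cast_ofNat]
    apply Finset.sum_congr rfl
    intro q hq
    have hqm : q ≤ m := Nat.lt_succ_iff.mp (Finset.mem_range.mp hq)
    have hsub : m + 2 - (q + 1) = (m - q) + 1 := by omega
    rw [hsub, Nat.choose_succ_succ]
    push_cast
    ring
  have h1 : auxG (m + 1)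
      = ∑ q ∈ Finset.range (m + 1), ((q : ℤ) + 1) * 2 ^ (q + 1) * (Nat.choose (m - q) (q + 1) : ℤ) := by
    unfold auxG
    rw [Finset.sum_range_succ']
    simp only [Nat.cast_zero, zero_mul, mul_zero, add_zero, pow_zero]
    apply Finset.sum_congr rfl
    intro q hq
    have hqm : q ≤ m := Nat.lt_succ_iff.mp (Finset.mem_range.mp hq)
    have hsub : m + 1 - (q + 1) = m - q := by omega
    rw [hsub]
    push_cast
    ring
  rw [h2, h1]
  unfold auxG auxF
  rw [Finset.mul_sum, Finset.mul_sum]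
  rw [← Finset.sum_add_distrib, ← Finset.sum_add_distrib]
  apply Finset.sum_congr rfl
  intro q hq
  ring

private lemma auxF_closed (m : ℕ) : 3 * auxF m = 2 ^ (m + 1) + (-1) ^ m := by
  induction m using Nat.strong_induction_on with
  | _ m ih =>
    match m with
    | 0 => simp [auxF_zero]
    | 1 => norm_num [auxF_one]
    | (k + 2) =>
      rw [auxF_rec]
      have h1 := ih (k + 1) (by omega)
      have h0 := ih k (by omega)
      have : 3 * (auxF (k + 1) + 2 * auxF k) = 3 * auxF (k+1) + 2 * (3 * auxF k) := by ring
      rw [this, h1, h0]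
      ring

private lemma auxG_closed (m : ℕ) :
    27 * auxG m = 6 * m * 2 ^ m - 2 * 2 ^ m + 6 * m * (-1) ^ m + 2 * (-1) ^ m := by
  induction m using Nat.strong_induction_on with
  | _ m ih =>
    match m with
    | 0 => simp [auxG_zero]
    | 1 => norm_num [auxG_one]
    | (k + 2) =>
      rw [auxG_rec]
      have h1 := ih (k + 1) (by omega)
      have h0 := ih k (by omega)
      have hf := auxF_closed k
      have : 27 * (auxG (k + 1) + 2 * auxG k + 2 * auxF k)
          = 27 * auxG (k + 1) + 2 * (27 * auxG k) + 18 * (3 * auxF k) := by ring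
      rw [this, h1, h0, hf]
      push_cast
      ring

/-- Lemma 2.3 (first identity): for every `n ≥ 1`,
`27 * ∑_{q=0}^{n-1} q * 2^q * C(2n-1-q, q) = 2 * ((3n-2) * 4^n - 6n + 2)`. -/
theorem sum_mul_two_pow_mul_choose (n : ℕ) (hn : 1 ≤ n) :
    27 * ∑ q ∈ Finset.range n, (q : ℤ) * 2 ^ q * (Nat.choose (2 * n - 1 - q) q : ℤ)
      = 2 * ((3 * (n : ℤ) - 2) * 4 ^ n - 6 * (n : ℤ) + 2) := by
  obtain ⟨k, rfl⟩ : ∃ k, n = k + 1 := ⟨n - 1, by omega⟩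
  have hsum : ∑ q ∈ Finset.range (k + 1), (q : ℤ) * 2 ^ q * (Nat.choose (2 * (k+1) - 1 - q) q : ℤ)
      = auxG (2 * k + 1) := by
    unfold auxG
    have hm : 2 * (k + 1) - 1 = 2 * k + 1 := by omega
    rw [hm]
    apply Finset.sum_subset
    · intro x hx
      simp only [Finset.mem_range] at *
      omega
    · intro x hx hx'
      simp only [Finset.mem_range] at *
      have : 2 * k + 1 - x < x := by omega
      rw [Nat.choose_eq_zero_of_lt this]
      simp
  rw [hsum]
  have hg := auxG_closed (2 * k + 1)
  rw [hg]
  have hpow : ((-1 : ℤ)) ^ (2 * k + 1) = -1 := by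
    rw [pow_succ, pow_mul]
    norm_num
  have hpow2 : (2 : ℤ) ^ (2 * k + 1) * 2 = 4 ^ (k + 1) := by
    rw [← pow_succ, show 2 * k + 1 + 1 = 2 * (k + 1) by ring, pow_mul]
    norm_num
  rw [hpow]
  push_cast
  nlinarith [hpow2]
end

section
/- For every integer n ≥ 1, the identity ∑_{q=0}^{n} q · 2^q · C(2n−q, q) = (2/27)·((6n−1)·4^n + 6n + 1) holds; equivalently, 27·∑_{q=0}^{n} q · 2^q · C(2n−q, q) = 2·((6n−1)·4^n + 6n + 1). -/
private def fAux (m : ℕ) : ℤ := ∑ q ∈ Finset.range (m + 1), 2 ^ q * (Nat.choose (m - q) q : ℤ)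
private def gAux (m : ℕ) : ℤ :=
  ∑ q ∈ Finset.range (m + 1), (q : ℤ) * 2 ^ q * (Nat.choose (m - q) q : ℤ)

private lemma fAux_rec (m : ℕ) : fAux (m + 2) = fAux (m + 1) + 2 * fAux m := by
  have h1 : fAux (m + 2) = ∑ q ∈ Finset.range (m + 2), 2 ^ q * (Nat.choose (m + 2 - q) q : ℤ) := by
    rw [fAux, Finset.sum_range_succ]
    simp
  rw [h1, Finset.sum_range_succ']
  have h2 : fAux (m + 1) = 1 + ∑ i ∈ Finset.range (m + 1), 2 ^ (i+1) * (Nat.choose (m - i) (i+1) : ℤ) := by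
    rw [fAux, Finset.sum_range_succ']
    have hs : ∀ i ∈ Finset.range (m + 1),
        (2:ℤ) ^ (i+1) * (Nat.choose (m + 1 - (i+1)) (i+1) : ℤ)
          = 2 ^ (i+1) * (Nat.choose (m - i) (i+1) : ℤ) := by
      intro i hi
      have h : m + 1 - (i + 1) = m - i := by omega
      rw [h]
    rw [Finset.sum_congr rfl hs]
    simp
    try ring
  rw [h2, fAux]
  have key : ∀ i ∈ Finset.range (m + 1),
      2 ^ (i+1) * (Nat.choose (m + 2 - (i+1)) (i+1) : ℤ)
        = 2 ^ (i+1) * (Nat.choose (m - i) (i+1) : ℤ) + 2 * (2 ^ i * (Nat.choose (m - i) i : ℤ)) := by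
    intro i hi
    simp only [Finset.mem_range] at hi
    have : m + 2 - (i + 1) = (m - i) + 1 := by omega
    rw [this, Nat.choose_succ_succ]
    push_cast
    ring
  rw [Finset.sum_congr rfl key, Finset.sum_add_distrib, ← Finset.mul_sum]
  simp
  try ring

private lemma gAux_rec (m : ℕ) : gAux (m + 2) = gAux (m + 1) + 2 * gAux m + 2 * fAux m := by
  have h1 : gAux (m + 2)
      = ∑ q ∈ Finset.range (m + 2), (q : ℤ) * 2 ^ q * (Nat.choose (m + 2 - q) q : ℤ) := by
    rw [gAux, Finset.sum_range_succ]
    simp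
  rw [h1, Finset.sum_range_succ']
  have h2 : gAux (m + 1)
      = ∑ i ∈ Finset.range (m + 1), ((i+1 : ℕ) : ℤ) * 2 ^ (i+1) * (Nat.choose (m - i) (i+1) : ℤ) := by
    rw [gAux, Finset.sum_range_succ']
    rw [add_comm]
    have : ((0:ℕ) : ℤ) * 2 ^ 0 * (Nat.choose (m + 1 - 0) 0 : ℤ) = 0 := by simp
    rw [this, zero_add]
    apply Finset.sum_congr rfl
    intro i hi
    have h : m + 1 - (i + 1) = m - i := by omega
    rw [h]
  rw [h2, gAux, fAux]
  have key : ∀ i ∈ Finset.range (m + 1),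
      ((i+1 : ℕ) : ℤ) * 2 ^ (i+1) * (Nat.choose (m + 2 - (i+1)) (i+1) : ℤ)
        = ((i+1 : ℕ) : ℤ) * 2 ^ (i+1) * (Nat.choose (m - i) (i+1) : ℤ)
          + 2 * ((i : ℤ) * 2 ^ i * (Nat.choose (m - i) i : ℤ))
          + 2 * (2 ^ i * (Nat.choose (m - i) i : ℤ)) := by
    intro i hi
    simp only [Finset.mem_range] at hi
    have : m + 2 - (i + 1) = (m - i) + 1 := by omega
    rw [this, Nat.choose_succ_succ]
    push_cast
    ring
  rw [Finset.sum_congr rfl key, Finset.sum_add_distrib, Finset.sum_add_distrib,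
    ← Finset.mul_sum, ← Finset.mul_sum]
  simp
  try ring

private lemma fAux_val (m : ℕ) : 3 * fAux m = 2 ^ (m + 1) + (-1) ^ m := by
  induction m using Nat.twoStepInduction with
  | zero => decide
  | one => decide
  | more m ih1 ih2 =>
      rw [fAux_rec]
      have h : 3 * (fAux (m+1) + 2 * fAux m) = 3 * fAux (m+1) + 2 * (3 * fAux m) := by ring
      rw [h, ih2, ih1]
      ring

private lemma gAux_val (m : ℕ) :
    27 * gAux m = 2 * ((3 * (m:ℤ) - 1) * 2 ^ m + (3 * (m:ℤ) + 1) * (-1) ^ m) := by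
  induction m using Nat.twoStepInduction with
  | zero => decide
  | one => decide
  | more m ih1 ih2 =>
      rw [gAux_rec]
      have h : 27 * (gAux (m+1) + 2 * gAux m + 2 * fAux m)
          = 27 * gAux (m+1) + 2 * (27 * gAux m) + 18 * (3 * fAux m) := by ring
      rw [h, ih2, ih1, fAux_val]
      push_cast
      ring

/-- Lemma 2.3 (second identity): for every `n ≥ 1`,
`27 * ∑_{q=0}^{n} q * 2^q * C(2n-q, q) = 2 * ((6n-1) * 4^n + 6n + 1)`. -/
theorem sum_mul_two_pow_mul_choose' (n : ℕ) (hn : 1 ≤ n) :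
    27 * ∑ q ∈ Finset.range (n + 1), (q : ℤ) * 2 ^ q * (Nat.choose (2 * n - q) q : ℤ)
      = 2 * ((6 * (n : ℤ) - 1) * 4 ^ n + 6 * (n : ℤ) + 1) := by
  have hext : ∑ q ∈ Finset.range (n + 1), (q : ℤ) * 2 ^ q * (Nat.choose (2 * n - q) q : ℤ)
      = gAux (2 * n) := by
    rw [gAux]
    apply Finset.sum_subset
    · intro x hx
      simp only [Finset.mem_range] at *
      omega
    · intro x hx hx'
      simp only [Finset.mem_range] at *
      have : Nat.choose (2 * n - x) x = 0 := Nat.choose_eq_zero_of_lt (by omega)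
      rw [this]
      simp
  rw [hext, gAux_val]
  have h4 : (2 : ℤ) ^ (2 * n) = 4 ^ n := by rw [pow_mul]; norm_num
  have hneg : (-1 : ℤ) ^ (2 * n) = 1 := by rw [pow_mul]; norm_num
  rw [h4, hneg]
  push_cast
  ring
end

section
/- For every integer k ≥ 2, the identity ∑_{l=0}^{k-2} 2l · 2^{k−l−2} · C(k+l−1, 2l) = (2/27)·((3k−2)·4^{k−1} − 15k + 14) holds; equivalently, 27·∑_{l=0}^{k-2} 2l · 2^{k−l−2} · C(k+l−1, 2l) = 2·((3k−2)·4^{k−1} − 15k + 14). (This sum is the total number of sign changes, summed over all two-bridge knots with crossing number c = 2k.) -/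
open Finset

private def Asum (m : ℕ) : ℤ :=
  ∑ l ∈ range (m + 1), 2 ^ (m - l) * ((m + l + 1).choose (2 * l) : ℤ)
private def Bsum (m : ℕ) : ℤ :=
  ∑ l ∈ range (m + 1), (l : ℤ) * 2 ^ (m - l) * ((m + l + 1).choose (2 * l) : ℤ)
private def Csum (m : ℕ) : ℤ :=
  ∑ l ∈ range m, 2 ^ (m - l - 1) * ((m + l + 2).choose (2 * l + 1) : ℤ)
private def Dsum (m : ℕ) : ℤ :=
  ∑ l ∈ range m, ((l : ℤ) + 1) * 2 ^ (m - l - 1) * ((m + l + 2).choose (2 * l + 1) : ℤ)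

private lemma pow2 (a b : ℕ) (h : a = b + 1) : (2:ℤ) ^ a = 2 * 2 ^ b := by
  rw [h, pow_succ]; ring

private lemma pascal1 (m i : ℕ) :
    ((m + (i+1) + 2).choose (2 * (i+1)) : ℤ)
      = ((m + i + 2).choose (2 * i + 1) : ℤ) + ((m + i + 2).choose (2 * i + 2) : ℤ) := by
  rw [show m + (i+1) + 2 = (m + i + 2) + 1 by omega, show 2 * (i+1) = (2 * i + 1) + 1 by omega,
    Nat.choose_succ_succ]
  push_cast; ring

private lemma pascal2 (m l : ℕ) :
    ((m + l + 3).choose (2 * l + 1) : ℤ)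
      = ((m + l + 2).choose (2 * l) : ℤ) + ((m + l + 2).choose (2 * l + 1) : ℤ) := by
  rw [show m + l + 3 = (m + l + 2) + 1 by omega, show 2 * l + 1 = (2 * l) + 1 by rfl,
    Nat.choose_succ_succ]
  push_cast; ring

private lemma hE (m : ℕ) :
    ∑ l ∈ range (m + 1), 2 ^ (m - l) * ((m + l + 2).choose (2 * l) : ℤ)
      = Asum m + Csum m := by
  rw [Finset.sum_range_succ', Asum, Finset.sum_range_succ', Csum]
  have h1 : ∀ i ∈ range m,
      2 ^ (m - (i+1)) * ((m + (i+1) + 2).choose (2 * (i+1)) : ℤ)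
        = 2 ^ (m - (i+1)) * ((m + (i+1) + 1).choose (2 * (i+1)) : ℤ)
          + 2 ^ (m - i - 1) * ((m + i + 2).choose (2 * i + 1) : ℤ) := by
    intro i hi
    have hi' := Finset.mem_range.mp hi
    rw [pascal1, show m + (i+1) + 1 = m + i + 2 by omega, show m - (i+1) = m - i - 1 by omega]
    ring
  rw [Finset.sum_congr rfl h1, Finset.sum_add_distrib]
  simp
  ring

private lemma hG (m : ℕ) :
    ∑ l ∈ range (m + 1), (l : ℤ) * 2 ^ (m - l) * ((m + l + 2).choose (2 * l) : ℤ)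
      = Bsum m + Dsum m := by
  rw [Finset.sum_range_succ', Bsum, Finset.sum_range_succ', Dsum]
  have h1 : ∀ i ∈ range m,
      ((i+1 : ℕ) : ℤ) * 2 ^ (m - (i+1)) * ((m + (i+1) + 2).choose (2 * (i+1)) : ℤ)
        = ((i+1 : ℕ) : ℤ) * 2 ^ (m - (i+1)) * ((m + (i+1) + 1).choose (2 * (i+1)) : ℤ)
          + ((i : ℤ) + 1) * 2 ^ (m - i - 1) * ((m + i + 2).choose (2 * i + 1) : ℤ) := by
    intro i hi
    have hi' := Finset.mem_range.mp hi
    rw [pascal1, show m + (i+1) + 1 = m + i + 2 by omega, show m - (i+1) = m - i - 1 by omega]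
    push_cast; ring
  rw [Finset.sum_congr rfl h1, Finset.sum_add_distrib]
  simp

private lemma hH (m : ℕ) :
    ∑ l ∈ range (m + 1), 2 ^ (m - l) * ((m + l + 2).choose (2 * l + 1) : ℤ)
      = 2 * Csum m + (2 * (m : ℤ) + 2) := by
  rw [Finset.sum_range_succ, Csum]
  have h1 : ∀ l ∈ range m,
      2 ^ (m - l) * ((m + l + 2).choose (2 * l + 1) : ℤ)
        = 2 * (2 ^ (m - l - 1) * ((m + l + 2).choose (2 * l + 1) : ℤ)) := by
    intro l hl
    have hl' := Finset.mem_range.mp hl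
    rw [pow2 (m - l) (m - l - 1) (by omega)]
    ring
  rw [Finset.sum_congr rfl h1, ← Finset.mul_sum]
  have h2 : ((m + m + 2).choose (2 * m + 1) : ℤ) = 2 * (m : ℤ) + 2 := by
    rw [show m + m + 2 = 2 * m + 2 by omega,
      show (2 * m + 2).choose (2 * m + 1) = (2 * m + 2).choose 1 by
        rw [← Nat.choose_symm (by omega)]; congr 1; omega]
    push_cast [Nat.choose_one_right]; ring
  rw [show m - m = 0 by omega, h2]
  push_cast; ring

private lemma hI (m : ℕ) :
    ∑ l ∈ range (m + 1), ((l : ℤ) + 1) * 2 ^ (m - l) * ((m + l + 2).choose (2 * l + 1) : ℤ)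
      = 2 * Dsum m + ((m : ℤ) + 1) * (2 * (m : ℤ) + 2) := by
  rw [Finset.sum_range_succ, Dsum]
  have h1 : ∀ l ∈ range m,
      ((l : ℤ) + 1) * 2 ^ (m - l) * ((m + l + 2).choose (2 * l + 1) : ℤ)
        = 2 * (((l : ℤ) + 1) * 2 ^ (m - l - 1) * ((m + l + 2).choose (2 * l + 1) : ℤ)) := by
    intro l hl
    have hl' := Finset.mem_range.mp hl
    rw [pow2 (m - l) (m - l - 1) (by omega)]
    ring
  rw [Finset.sum_congr rfl h1, ← Finset.mul_sum]
  have h2 : ((m + m + 2).choose (2 * m + 1) : ℤ) = 2 * (m : ℤ) + 2 := by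
    rw [show m + m + 2 = 2 * m + 2 by omega,
      show (2 * m + 2).choose (2 * m + 1) = (2 * m + 2).choose 1 by
        rw [← Nat.choose_symm (by omega)]; congr 1; omega]
    push_cast [Nat.choose_one_right]; ring
  rw [show m - m = 0 by omega, h2]
  push_cast; ring

private lemma chooseTop (m : ℕ) : ((2 * m + 3).choose (2 * m + 2) : ℤ) = 2 * (m : ℤ) + 3 := by
  rw [show (2 * m + 3).choose (2 * m + 2) = (2 * m + 3).choose 1 by
      rw [← Nat.choose_symm (by omega)]; congr 1; omega]
  push_cast [Nat.choose_one_right]; ring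

private lemma recA (m : ℕ) : Asum (m + 1) = 2 * Asum m + 2 * Csum m + (2 * (m : ℤ) + 3) := by
  rw [Asum, Finset.sum_range_succ]
  have h1 : ∀ l ∈ range (m + 1),
      2 ^ (m + 1 - l) * (((m + 1) + l + 1).choose (2 * l) : ℤ)
        = 2 * (2 ^ (m - l) * ((m + l + 2).choose (2 * l) : ℤ)) := by
    intro l hl
    have hl' := Finset.mem_range.mp hl
    rw [show m + 1 - l = (m - l) + 1 by omega, pow_succ, show m + 1 + l + 1 = m + l + 2 by omega]
    ring
  rw [Finset.sum_congr rfl h1, ← Finset.mul_sum, hE,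
    show m + 1 + (m + 1) + 1 = 2 * m + 3 by omega, show 2 * (m + 1) = 2 * m + 2 by omega,
    show m + 1 - (m + 1) = 0 by omega, chooseTop]
  ring

private lemma recB (m : ℕ) :
    Bsum (m + 1) = 2 * Bsum m + 2 * Dsum m + ((m : ℤ) + 1) * (2 * (m : ℤ) + 3) := by
  rw [Bsum, Finset.sum_range_succ]
  have h1 : ∀ l ∈ range (m + 1),
      (l : ℤ) * 2 ^ (m + 1 - l) * (((m + 1) + l + 1).choose (2 * l) : ℤ)
        = 2 * ((l : ℤ) * 2 ^ (m - l) * ((m + l + 2).choose (2 * l) : ℤ)) := by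
    intro l hl
    have hl' := Finset.mem_range.mp hl
    rw [show m + 1 - l = (m - l) + 1 by omega, pow_succ, show m + 1 + l + 1 = m + l + 2 by omega]
    ring
  rw [Finset.sum_congr rfl h1, ← Finset.mul_sum, hG,
    show m + 1 + (m + 1) + 1 = 2 * m + 3 by omega, show 2 * (m + 1) = 2 * m + 2 by omega,
    show m + 1 - (m + 1) = 0 by omega, chooseTop]
  push_cast; ring

private lemma recC (m : ℕ) :
    Csum (m + 1) = Asum m + 3 * Csum m + (2 * (m : ℤ) + 2) := by
  rw [Csum]
  have h1 : ∀ l ∈ range (m + 1),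
      2 ^ (m + 1 - l - 1) * (((m + 1) + l + 2).choose (2 * l + 1) : ℤ)
        = 2 ^ (m - l) * ((m + l + 2).choose (2 * l) : ℤ)
          + 2 ^ (m - l) * ((m + l + 2).choose (2 * l + 1) : ℤ) := by
    intro l hl
    have hl' := Finset.mem_range.mp hl
    rw [show m + 1 + l + 2 = m + l + 3 by omega, pascal2, show m + 1 - l - 1 = m - l by omega]
    ring
  rw [Finset.sum_congr rfl h1, Finset.sum_add_distrib, hE, hH]
  ring

private lemma recD (m : ℕ) :
    Dsum (m + 1) = Asum m + Bsum m + Csum m + 3 * Dsum m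
      + ((m : ℤ) + 1) * (2 * (m : ℤ) + 2) := by
  rw [Dsum]
  have h1 : ∀ l ∈ range (m + 1),
      ((l : ℤ) + 1) * 2 ^ (m + 1 - l - 1) * (((m + 1) + l + 2).choose (2 * l + 1) : ℤ)
        = (2 ^ (m - l) * ((m + l + 2).choose (2 * l) : ℤ)
            + (l : ℤ) * 2 ^ (m - l) * ((m + l + 2).choose (2 * l) : ℤ))
          + ((l : ℤ) + 1) * 2 ^ (m - l) * ((m + l + 2).choose (2 * l + 1) : ℤ) := by
    intro l hl
    have hl' := Finset.mem_range.mp hl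
    rw [show m + 1 + l + 2 = m + l + 3 by omega, pascal2, show m + 1 - l - 1 = m - l by omega]
    ring
  rw [Finset.sum_congr rfl h1, Finset.sum_add_distrib, Finset.sum_add_distrib, hE, hG, hI]
  ring

private lemma closedForms (m : ℕ) :
    3 * Asum m = 4 ^ (m + 1) - 1 ∧
    27 * Bsum m = (3 * (m : ℤ) + 4) * 4 ^ (m + 1) - 15 * (m : ℤ) - 16 ∧
    3 * Csum m = 4 ^ (m + 1) - 3 * (m : ℤ) - 4 ∧
    27 * Dsum m = (3 * (m : ℤ) + 10) * 4 ^ (m + 1) - 27 * (m : ℤ) ^ 2 - 60 * (m : ℤ) - 40 := by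
  induction m with
  | zero =>
    refine ⟨?_, ?_, ?_, ?_⟩ <;> simp [Asum, Bsum, Csum, Dsum] <;> norm_num
  | succ n ih =>
    obtain ⟨hA, hB, hC, hD⟩ := ih
    refine ⟨?_, ?_, ?_, ?_⟩
    · rw [recA]; push_cast; linear_combination 2 * hA + 2 * hC
    · rw [recB]; push_cast; linear_combination 2 * hB + 2 * hD
    · rw [recC]; push_cast; linear_combination hA + 3 * hC
    · rw [recD]; push_cast; linear_combination 9 * hA + hB + 9 * hC + 3 * hD

/-- Total "sign change" for even crossing number `c = 2k`: for every `k ≥ 2`,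
`27 * ∑_{l=0}^{k-2} 2l * 2^(k-l-2) * C(k+l-1, 2l) = 2 * ((3k-2) * 4^(k-1) - 15k + 14)`. -/
theorem total_sign_change_even (k : ℕ) (hk : 2 ≤ k) :
    27 * ∑ l ∈ Finset.range (k - 1),
        (2 * (l : ℤ)) * 2 ^ (k - l - 2) * (Nat.choose (k + l - 1) (2 * l) : ℤ)
      = 2 * ((3 * (k : ℤ) - 2) * 4 ^ (k - 1) - 15 * (k : ℤ) + 14) := by
  obtain ⟨m, rfl⟩ : ∃ m, k = m + 2 := ⟨k - 2, by omega⟩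
  have hB := (closedForms m).2.1
  have hsum : ∑ l ∈ Finset.range (m + 2 - 1),
      (2 * (l : ℤ)) * 2 ^ (m + 2 - l - 2) * (Nat.choose (m + 2 + l - 1) (2 * l) : ℤ)
        = 2 * Bsum m := by
    rw [Bsum, Finset.mul_sum, show m + 2 - 1 = m + 1 by omega]
    refine Finset.sum_congr rfl fun l hl => ?_
    have hl' := Finset.mem_range.mp hl
    rw [show m + 2 - l - 2 = m - l by omega, show m + 2 + l - 1 = m + l + 1 by omega]
    ring
  rw [hsum, show m + 2 - 1 = m + 1 by omega]
  push_cast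
  linear_combination 2 * hB
end

section
/- For every integer k ≥ 1, the identity ∑_{l=0}^{k-1} (2l+1) · 2^{k−l−1} · C(k+l, 2l+1) = (1/27)·((6k−1)·4^k + 6k + 1) holds; equivalently, 27·∑_{l=0}^{k-1} (2l+1) · 2^{k−l−1} · C(k+l, 2l+1) = (6k−1)·4^k + 6k + 1. -/
open Finset

private def G (a b : ℤ) (c k : ℕ) : ℤ :=
  ∑ l ∈ Finset.range (k + 1), (a * (l : ℤ) + b) * 2 ^ (k - l) * (Nat.choose (k + l) (2 * l + c) : ℤ)

private lemma GL1 (a b : ℤ) (k : ℕ) : G a b 1 (k + 1) = 2 * G a b 0 k + 2 * G a b 1 k := by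
  unfold G
  rw [Finset.sum_range_succ]
  have h0 : Nat.choose (k + 1 + (k + 1)) (2 * (k + 1) + 1) = 0 :=
    Nat.choose_eq_zero_of_lt (by omega)
  have hterm : ∀ l ∈ Finset.range (k + 1),
      (a * (l : ℤ) + b) * 2 ^ (k + 1 - l) * (Nat.choose (k + 1 + l) (2 * l + 1) : ℤ)
        = 2 * ((a * (l : ℤ) + b) * 2 ^ (k - l) * (Nat.choose (k + l) (2 * l + 0) : ℤ))
          + 2 * ((a * (l : ℤ) + b) * 2 ^ (k - l) * (Nat.choose (k + l) (2 * l + 1) : ℤ)) := by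
    intro l hl
    simp only [Finset.mem_range] at hl
    have e1 : k + 1 - l = (k - l) + 1 := by omega
    have e2 : k + 1 + l = (k + l) + 1 := by omega
    rw [e1, e2, Nat.choose_succ_succ (k + l) (2 * l)]
    simp only [Nat.succ_eq_add_one]
    push_cast
    ring
  rw [Finset.sum_congr rfl hterm, Finset.sum_add_distrib, h0]
  rw [Finset.mul_sum, Finset.mul_sum]
  push_cast
  ring

private lemma GL2 (a b : ℤ) (k : ℕ) :
    2 * G a b 0 (k + 1) = G a (a + b) 1 (k + 1) + 4 * G a b 0 k := by
  have hGk : G a b 0 k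
      = (∑ l ∈ Finset.range k,
          (a * (l : ℤ) + a + b) * 2 ^ (k - l - 1) * (Nat.choose (k + l + 1) (2 * l + 2) : ℤ))
        + b * 2 ^ k := by
    unfold G
    rw [Finset.sum_range_succ']
    congr 1
    · refine Finset.sum_congr rfl ?_
      intro l hl
      simp only [Finset.mem_range] at hl
      have e1 : k - (l + 1) = k - l - 1 := by omega
      have e2 : k + (l + 1) = k + l + 1 := by omega
      have e3 : 2 * (l + 1) + 0 = 2 * l + 2 := by omega
      rw [e1, e2, e3]
      push_cast
      ring
    · simp
  have hstep : G a b 0 (k + 1)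
      = (∑ l ∈ Finset.range (k + 1),
          (a * (l : ℤ) + a + b) * 2 ^ (k - l) * (Nat.choose (k + l + 2) (2 * l + 2) : ℤ))
        + b * 2 ^ (k + 1) := by
    unfold G
    rw [Finset.sum_range_succ']
    congr 1
    · refine Finset.sum_congr rfl ?_
      intro l hl
      simp only [Finset.mem_range] at hl
      have e1 : k + 1 - (l + 1) = k - l := by omega
      have e2 : k + 1 + (l + 1) = k + l + 2 := by omega
      have e3 : 2 * (l + 1) + 0 = 2 * l + 2 := by omega
      rw [e1, e2, e3]
      push_cast
      ring
    · simp
  -- split via Pascal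
  have hpascal : ∀ l : ℕ, (Nat.choose (k + l + 2) (2 * l + 2) : ℤ)
      = (Nat.choose (k + l + 1) (2 * l + 1) : ℤ) + (Nat.choose (k + l + 1) (2 * l + 2) : ℤ) := by
    intro l
    have := Nat.choose_succ_succ (k + l + 1) (2 * l + 1)
    rw [this]
    push_cast
    ring
  have hsplit : (∑ l ∈ Finset.range (k + 1),
        (a * (l : ℤ) + a + b) * 2 ^ (k - l) * (Nat.choose (k + l + 2) (2 * l + 2) : ℤ))
      = (∑ l ∈ Finset.range (k + 1),
          (a * (l : ℤ) + a + b) * 2 ^ (k - l) * (Nat.choose (k + l + 1) (2 * l + 1) : ℤ))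
        + (∑ l ∈ Finset.range (k + 1),
          (a * (l : ℤ) + a + b) * 2 ^ (k - l) * (Nat.choose (k + l + 1) (2 * l + 2) : ℤ)) := by
    rw [← Finset.sum_add_distrib]
    refine Finset.sum_congr rfl ?_
    intro l _
    rw [hpascal l]
    ring
  -- S1 relation
  have hS1 : G a (a + b) 1 (k + 1)
      = 2 * ∑ l ∈ Finset.range (k + 1),
          (a * (l : ℤ) + a + b) * 2 ^ (k - l) * (Nat.choose (k + l + 1) (2 * l + 1) : ℤ) := by
    unfold G
    rw [Finset.sum_range_succ]
    have h0 : Nat.choose (k + 1 + (k + 1)) (2 * (k + 1) + 1) = 0 :=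
      Nat.choose_eq_zero_of_lt (by omega)
    rw [h0]
    rw [Finset.mul_sum]
    have : ∀ l ∈ Finset.range (k + 1),
        (a * (l : ℤ) + (a + b)) * 2 ^ (k + 1 - l) * (Nat.choose (k + 1 + l) (2 * l + 1) : ℤ)
          = 2 * ((a * (l : ℤ) + a + b) * 2 ^ (k - l) * (Nat.choose (k + l + 1) (2 * l + 1) : ℤ)) := by
      intro l hl
      simp only [Finset.mem_range] at hl
      have e1 : k + 1 - l = (k - l) + 1 := by omega
      have e2 : k + 1 + l = k + l + 1 := by omega
      rw [e1, e2]
      push_cast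
      ring
    rw [Finset.sum_congr rfl this]
    push_cast
    ring
  -- S2 relation
  have hS2 : (∑ l ∈ Finset.range (k + 1),
        (a * (l : ℤ) + a + b) * 2 ^ (k - l) * (Nat.choose (k + l + 1) (2 * l + 2) : ℤ))
      = 2 * (G a b 0 k - b * 2 ^ k) := by
    rw [Finset.sum_range_succ]
    have h0 : Nat.choose (k + k + 1) (2 * k + 2) = 0 := Nat.choose_eq_zero_of_lt (by omega)
    rw [h0]
    have : ∀ l ∈ Finset.range k,
        (a * (l : ℤ) + a + b) * 2 ^ (k - l) * (Nat.choose (k + l + 1) (2 * l + 2) : ℤ)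
          = 2 * ((a * (l : ℤ) + a + b) * 2 ^ (k - l - 1) * (Nat.choose (k + l + 1) (2 * l + 2) : ℤ)) := by
      intro l hl
      simp only [Finset.mem_range] at hl
      have e1 : k - l = (k - l - 1) + 1 := by omega
      rw [e1]
      push_cast
      ring
    rw [Finset.sum_congr rfl this, ← Finset.mul_sum]
    have := hGk
    push_cast
    linarith [hGk]
  rw [hstep, hsplit, hS2]
  have hp : (2 : ℤ) ^ (k + 1) = 2 * 2 ^ k := by ring
  rw [hp]
  linarith [hS1]

private lemma Gadd (a b : ℤ) (m : ℕ) :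
    G a (a + b) 1 m = G a b 1 m + a * G 0 1 1 m := by
  unfold G
  rw [Finset.mul_sum, ← Finset.sum_add_distrib]
  refine Finset.sum_congr rfl ?_
  intro l _
  ring

private lemma closed_forms (k : ℕ) :
    3 * G 0 1 0 k = 2 * 4 ^ k + 1 ∧ 3 * G 0 1 1 k = 2 * 4 ^ k - 2 ∧
    27 * G 2 1 0 k = (12 * (k : ℤ) + 22) * 4 ^ k - 6 * (k : ℤ) + 5 ∧
    27 * G 2 1 1 k = 2 * ((6 * (k : ℤ) - 1) * 4 ^ k + 6 * (k : ℤ) + 1) := by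
  induction k with
  | zero =>
    unfold G
    norm_num
  | succ k ih =>
    obtain ⟨h1, h2, h3, h4⟩ := ih
    have r1 := GL1 0 1 k
    have r2 := GL1 2 1 k
    have r3 := GL2 0 1 k
    have r4 := GL2 2 1 k
    have r5 := Gadd 0 1 (k + 1)
    have r6 := Gadd 2 1 (k + 1)
    have hp : (4 : ℤ) ^ (k + 1) = 4 * 4 ^ k := by ring
    refine ⟨?_, ?_, ?_, ?_⟩ <;> push_cast [hp] at * <;> linarith

/-- First sum in the odd crossing number case: for every `k ≥ 1`,
`27 * ∑_{l=0}^{k-1} (2l+1) * 2^(k-l-1) * C(k+l, 2l+1) = (6k-1) * 4^k + 6k + 1`. -/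
theorem first_sum_odd (k : ℕ) (hk : 1 ≤ k) :
    27 * ∑ l ∈ Finset.range k,
        (2 * (l : ℤ) + 1) * 2 ^ (k - l - 1) * (Nat.choose (k + l) (2 * l + 1) : ℤ)
      = (6 * (k : ℤ) - 1) * 4 ^ k + 6 * (k : ℤ) + 1 := by
  have h := (closed_forms k).2.2.2
  have hG : G 2 1 1 k = 2 * ∑ l ∈ Finset.range k,
      (2 * (l : ℤ) + 1) * 2 ^ (k - l - 1) * (Nat.choose (k + l) (2 * l + 1) : ℤ) := by
    unfold G
    rw [Finset.sum_range_succ]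
    have h0 : Nat.choose (k + k) (2 * k + 1) = 0 := Nat.choose_eq_zero_of_lt (by omega)
    rw [h0]
    have : ∀ l ∈ Finset.range k,
        (2 * (l : ℤ) + 1) * 2 ^ (k - l) * (Nat.choose (k + l) (2 * l + 1) : ℤ)
          = 2 * ((2 * (l : ℤ) + 1) * 2 ^ (k - l - 1) * (Nat.choose (k + l) (2 * l + 1) : ℤ)) := by
      intro l hl
      simp only [Finset.mem_range] at hl
      have e1 : k - l = (k - l - 1) + 1 := by omega
      rw [e1]
      push_cast
      ring
    rw [Finset.sum_congr rfl this, ← Finset.mul_sum]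
    push_cast
    ring
  rw [hG] at h
  linarith
end

section
/- For every integer n ≥ 1, the identity ∑_{p=0}^{n-1} (4p+3) · 2^{n−p−1} · C(n+p, 2p+1) = (1/27)·((12n+7)·4^n + 12n − 7) holds; equivalently, 27·∑_{p=0}^{n-1} (4p+3) · 2^{n−p−1} · C(n+p, 2p+1) = (12n+7)·4^n + 12n − 7. -/
open Finset

/-- weighted sum over `C(n+p, 2p+1)` -/
def Sw (w : ℕ → ℤ) (n : ℕ) : ℤ :=
  ∑ p ∈ Finset.range n, w p * 2 ^ (n - p - 1) * (Nat.choose (n + p) (2 * p + 1) : ℤ)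

/-- weighted sum over `C(n+p, 2p)` -/
def Uw (w : ℕ → ℤ) (n : ℕ) : ℤ :=
  ∑ p ∈ Finset.range (n + 1), w p * 2 ^ (n - p) * (Nat.choose (n + p) (2 * p) : ℤ)

lemma Sw_succ (w : ℕ → ℤ) (n : ℕ) : Sw w (n + 1) = 2 * Sw w n + Uw w n := by
  have h1 : Sw w (n + 1)
      = ∑ p ∈ Finset.range (n + 1),
          (w p * 2 ^ (n - p) * (Nat.choose (n + p) (2 * p) : ℤ)
            + w p * 2 ^ (n - p) * (Nat.choose (n + p) (2 * p + 1) : ℤ)) := by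
    unfold Sw
    refine Finset.sum_congr rfl fun p hp => ?_
    rw [Finset.mem_range] at hp
    have hexp : n + 1 - p - 1 = n - p := by omega
    have hch : Nat.choose (n + 1 + p) (2 * p + 1)
        = Nat.choose (n + p) (2 * p) + Nat.choose (n + p) (2 * p + 1) := by
      have h : n + 1 + p = (n + p) + 1 := by omega
      rw [h, Nat.choose_succ_succ]
    rw [hexp, hch]
    push_cast
    ring
  rw [h1, Finset.sum_add_distrib]
  have h3 : ∑ p ∈ Finset.range (n + 1),
      w p * 2 ^ (n - p) * (Nat.choose (n + p) (2 * p + 1) : ℤ) = 2 * Sw w n := by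
    rw [Finset.sum_range_succ]
    have hz : Nat.choose (n + n) (2 * n + 1) = 0 :=
      Nat.choose_eq_zero_of_lt (by omega)
    rw [hz, Nat.cast_zero, mul_zero, add_zero]
    unfold Sw
    rw [Finset.mul_sum]
    refine Finset.sum_congr rfl fun p hp => ?_
    rw [Finset.mem_range] at hp
    have h : (2 : ℤ) ^ (n - p) = 2 ^ ((n - p - 1) + 1) := by congr 1; omega
    rw [h, pow_succ]
    ring
  rw [h3]
  have h2 : ∑ p ∈ Finset.range (n + 1),
      w p * 2 ^ (n - p) * (Nat.choose (n + p) (2 * p) : ℤ) = Uw w n := rfl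
  rw [h2]; ring

lemma Uw_succ (w : ℕ → ℤ) (n : ℕ) :
    Uw w (n + 1) = Sw (fun p => w (p + 1)) (n + 1) + 2 * Uw w n := by
  have h1 : Uw w (n + 1)
      = (∑ i ∈ Finset.range (n + 1),
          w (i + 1) * 2 ^ (n + 1 - (i + 1)) * (Nat.choose (n + 1 + (i + 1)) (2 * (i + 1)) : ℤ))
        + w 0 * 2 ^ (n + 1) * (Nat.choose (n + 1) 0 : ℤ) := by
    unfold Uw
    rw [Finset.sum_range_succ']
    norm_num
  rw [h1]
  have h2 : ∀ i ∈ Finset.range (n + 1),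
      w (i + 1) * 2 ^ (n + 1 - (i + 1)) * (Nat.choose (n + 1 + (i + 1)) (2 * (i + 1)) : ℤ)
      = w (i + 1) * 2 ^ (n - i) * (Nat.choose (n + 1 + i) (2 * i + 1) : ℤ)
        + w (i + 1) * 2 ^ (n - i) * (Nat.choose (n + 1 + i) (2 * i + 2) : ℤ) := by
    intro i hi
    rw [Finset.mem_range] at hi
    have hexp : n + 1 - (i + 1) = n - i := by omega
    have hch : Nat.choose (n + 1 + (i + 1)) (2 * (i + 1))
        = Nat.choose (n + 1 + i) (2 * i + 1) + Nat.choose (n + 1 + i) (2 * i + 2) := by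
      have h : n + 1 + (i + 1) = (n + 1 + i) + 1 := by omega
      have h' : 2 * (i + 1) = (2 * i + 1) + 1 := by omega
      rw [h, h', Nat.choose_succ_succ]
    rw [hexp, hch]
    push_cast
    ring
  rw [Finset.sum_congr rfl h2, Finset.sum_add_distrib]
  have h3 : ∑ i ∈ Finset.range (n + 1),
      w (i + 1) * 2 ^ (n - i) * (Nat.choose (n + 1 + i) (2 * i + 1) : ℤ)
      = Sw (fun p => w (p + 1)) (n + 1) := by
    unfold Sw
    refine Finset.sum_congr rfl fun i hi => ?_
    rw [Finset.mem_range] at hi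
    have hexp : n + 1 - i - 1 = n - i := by omega
    rw [hexp]
  rw [h3]
  have h4 : ∑ i ∈ Finset.range (n + 1),
      w (i + 1) * 2 ^ (n - i) * (Nat.choose (n + 1 + i) (2 * i + 2) : ℤ)
      = 2 * Uw w n - w 0 * 2 ^ (n + 1) := by
    rw [Finset.sum_range_succ]
    have hz : Nat.choose (n + 1 + n) (2 * n + 2) = 0 :=
      Nat.choose_eq_zero_of_lt (by omega)
    rw [hz, Nat.cast_zero, mul_zero, add_zero]
    have h5 : Uw w n
        = (∑ i ∈ Finset.range n,
            w (i + 1) * 2 ^ (n - (i + 1)) * (Nat.choose (n + (i + 1)) (2 * (i + 1)) : ℤ))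
          + w 0 * 2 ^ n * (Nat.choose n 0 : ℤ) := by
      unfold Uw
      rw [Finset.sum_range_succ']
      norm_num
    rw [h5, mul_add, Finset.mul_sum]
    have h6 : ∀ i ∈ Finset.range n,
        w (i + 1) * 2 ^ (n - i) * (Nat.choose (n + 1 + i) (2 * i + 2) : ℤ)
        = 2 * (w (i + 1) * 2 ^ (n - (i + 1)) * (Nat.choose (n + (i + 1)) (2 * (i + 1)) : ℤ)) := by
      intro i hi
      rw [Finset.mem_range] at hi
      have h : (2 : ℤ) ^ (n - i) = 2 ^ ((n - (i + 1)) + 1) := by congr 1; omega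
      have h' : Nat.choose (n + (i + 1)) (2 * (i + 1)) = Nat.choose (n + 1 + i) (2 * i + 2) := by
        congr 1 <;> omega
      rw [h, pow_succ, h']
      ring
    rw [Finset.sum_congr rfl h6]
    rw [Nat.choose_zero_right, Nat.cast_one, pow_succ]
    ring
  rw [h4]
  have : Nat.choose (n + 1) 0 = 1 := Nat.choose_zero_right _
  rw [this]
  push_cast
  ring

lemma Sw_shift (n : ℕ) :
    Sw (fun p => 4 * ((p : ℤ) + 1) + 3) n
      = Sw (fun p => 4 * (p : ℤ) + 3) n + 4 * Sw (fun _ => 1) n := by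
  unfold Sw
  rw [Finset.mul_sum, ← Finset.sum_add_distrib]
  refine Finset.sum_congr rfl fun p _ => ?_
  ring

lemma key_s9 (n : ℕ) :
    27 * Sw (fun _ => 1) n = 9 * 4 ^ n - 9
    ∧ 27 * Uw (fun _ => 1) n = 18 * 4 ^ n + 9
    ∧ 27 * Sw (fun p => 4 * (p : ℤ) + 3) n = (12 * (n : ℤ) + 7) * 4 ^ n + 12 * (n : ℤ) - 7
    ∧ 27 * Uw (fun p => 4 * (p : ℤ) + 3) n = (24 * (n : ℤ) + 62) * 4 ^ n - 12 * (n : ℤ) + 19 := by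
  induction n with
  | zero =>
    refine ⟨?_, ?_, ?_, ?_⟩ <;> simp [Sw, Uw]
  | succ n ih =>
    obtain ⟨ih1, ih2, ih3, ih4⟩ := ih
    have hB : 27 * Sw (fun _ => 1) (n + 1) = 9 * 4 ^ (n + 1) - 9 := by
      rw [Sw_succ]
      push_cast [pow_succ]
      linarith
    have hD : 27 * Uw (fun _ => 1) (n + 1) = 18 * 4 ^ (n + 1) + 9 := by
      rw [Uw_succ]
      have : Sw (fun _ => (1 : ℤ)) (n + 1) = Sw (fun _ => 1) (n + 1) := rfl
      push_cast [pow_succ] at hB ⊢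
      linarith
    have hS : 27 * Sw (fun p => 4 * (p : ℤ) + 3) (n + 1)
        = (12 * ((n : ℤ) + 1) + 7) * 4 ^ (n + 1) + 12 * ((n : ℤ) + 1) - 7 := by
      rw [Sw_succ]
      push_cast [pow_succ]
      linarith
    have hU : 27 * Uw (fun p => 4 * (p : ℤ) + 3) (n + 1)
        = (24 * ((n : ℤ) + 1) + 62) * 4 ^ (n + 1) - 12 * ((n : ℤ) + 1) + 19 := by
      rw [Uw_succ]
      have hsh : Sw (fun p => 4 * ((p : ℕ) + 1 : ℕ) + 3) (n + 1)
          = Sw (fun p => 4 * (p : ℤ) + 3) (n + 1) + 4 * Sw (fun _ => 1) (n + 1) := by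
        rw [← Sw_shift]
        refine Finset.sum_congr rfl fun p _ => ?_
        push_cast
        ring
      rw [hsh]
      push_cast [pow_succ] at hB hS ⊢
      linarith
    push_cast at hS hU ⊢
    exact ⟨hB, hD, hS, hU⟩

/-- Second sum in the case `c ≡ 1 (mod 4)` (`k = 2n`): for every `n ≥ 1`,
`27 * ∑_{p=0}^{n-1} (4p+3) * 2^(n-p-1) * C(n+p, 2p+1) = (12n+7) * 4^n + 12n - 7`. -/
theorem second_sum_one_mod_four (n : ℕ) (hn : 1 ≤ n) :
    27 * ∑ p ∈ Finset.range n,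
        (4 * (p : ℤ) + 3) * 2 ^ (n - p - 1) * (Nat.choose (n + p) (2 * p + 1) : ℤ)
      = (12 * (n : ℤ) + 7) * 4 ^ n + 12 * (n : ℤ) - 7 := by
  exact (key_s9 n).2.2.1
end

section
/- For every integer n ≥ 0, the identity ∑_{p=0}^{n} (4p+1) · 2^{n−p} · C(n+p, 2p) = (1/27)·((24n+26)·4^n − 12n + 1) holds; equivalently, 27·∑_{p=0}^{n} (4p+1) · 2^{n−p} · C(n+p, 2p) = (24n+26)·4^n − 12n + 1. -/
open Finset

/-- `az n = ∑_{p=0}^n 2^(n-p) C(n+p, 2p)` -/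
def az (n : ℕ) : ℤ := ∑ p ∈ Finset.range (n+1), 2^(n-p) * (Nat.choose (n+p) (2*p) : ℤ)
/-- `dz n = ∑_{p=0}^n 2^(n-p) C(n+p, 2p+1)` -/
def dz (n : ℕ) : ℤ := ∑ p ∈ Finset.range (n+1), 2^(n-p) * (Nat.choose (n+p) (2*p+1) : ℤ)
/-- `bz n = ∑_{p=0}^n p 2^(n-p) C(n+p, 2p)` -/
def bz (n : ℕ) : ℤ := ∑ p ∈ Finset.range (n+1), (p:ℤ) * 2^(n-p) * (Nat.choose (n+p) (2*p) : ℤ)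
/-- `ez n = ∑_{p=0}^n p 2^(n-p) C(n+p, 2p+1)` -/
def ez (n : ℕ) : ℤ := ∑ p ∈ Finset.range (n+1), (p:ℤ) * 2^(n-p) * (Nat.choose (n+p) (2*p+1) : ℤ)

lemma range_trick (n : ℕ) (f : ℕ → ℤ) (h : f (n+1) = 0) :
    ∑ q ∈ Finset.range (n+1), f (q+1) = ∑ p ∈ Finset.range (n+1), f p - f 0 := by
  have h1 := Finset.sum_range_succ f (n+1)
  have h2 := Finset.sum_range_succ' f (n+1)
  rw [h, add_zero] at h1
  rw [h1] at h2
  linarith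

lemma double_sum' (n : ℕ) (c : ℕ → ℤ) :
    ∑ p ∈ Finset.range (n+1), (2:ℤ)^(n+1-p) * c p
      = 2 * ∑ p ∈ Finset.range (n+1), (2:ℤ)^(n-p) * c p := by
  rw [Finset.mul_sum]
  refine Finset.sum_congr rfl fun p hp => ?_
  have hp' : p < n+1 := Finset.mem_range.mp hp
  have he : n+1-p = (n-p)+1 := by omega
  rw [he, pow_succ]; ring

lemma double_sum (n : ℕ) (c : ℕ → ℤ) (h : c (n+1) = 0) :
    ∑ p ∈ Finset.range (n+2), (2:ℤ)^(n+1-p) * c p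
      = 2 * ∑ p ∈ Finset.range (n+1), (2:ℤ)^(n-p) * c p := by
  rw [Finset.sum_range_succ, h, mul_zero, add_zero, double_sum']

lemma double_sumw' (n : ℕ) (c : ℕ → ℤ) :
    ∑ p ∈ Finset.range (n+1), (p:ℤ) * (2:ℤ)^(n+1-p) * c p
      = 2 * ∑ p ∈ Finset.range (n+1), (p:ℤ) * (2:ℤ)^(n-p) * c p := by
  rw [Finset.mul_sum]
  refine Finset.sum_congr rfl fun p hp => ?_
  have hp' : p < n+1 := Finset.mem_range.mp hp
  have he : n+1-p = (n-p)+1 := by omega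
  rw [he, pow_succ]; ring

lemma double_sumw (n : ℕ) (c : ℕ → ℤ) (h : c (n+1) = 0) :
    ∑ p ∈ Finset.range (n+2), (p:ℤ) * (2:ℤ)^(n+1-p) * c p
      = 2 * ∑ p ∈ Finset.range (n+1), (p:ℤ) * (2:ℤ)^(n-p) * c p := by
  rw [Finset.sum_range_succ, h, mul_zero, add_zero, double_sumw']

lemma Hq1 (n : ℕ) :
    ∑ q ∈ Finset.range (n+1), (2:ℤ)^(n-q) * (Nat.choose (n+1+q) (2*q+1) : ℤ)
      = az n + dz n := by
  have : ∀ q ∈ Finset.range (n+1),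
      (2:ℤ)^(n-q) * (Nat.choose (n+1+q) (2*q+1) : ℤ)
        = 2^(n-q) * (Nat.choose (n+q) (2*q) : ℤ)
          + 2^(n-q) * (Nat.choose (n+q) (2*q+1) : ℤ) := by
    intro q _
    have h : n+1+q = (n+q)+1 := by omega
    rw [h, Nat.choose_succ_succ]
    push_cast; ring
  rw [Finset.sum_congr rfl this, Finset.sum_add_distrib]
  rfl

lemma Hq1w (n : ℕ) :
    ∑ q ∈ Finset.range (n+1), (q:ℤ) * (2:ℤ)^(n-q) * (Nat.choose (n+1+q) (2*q+1) : ℤ)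
      = bz n + ez n := by
  have : ∀ q ∈ Finset.range (n+1),
      (q:ℤ) * (2:ℤ)^(n-q) * (Nat.choose (n+1+q) (2*q+1) : ℤ)
        = (q:ℤ) * 2^(n-q) * (Nat.choose (n+q) (2*q) : ℤ)
          + (q:ℤ) * 2^(n-q) * (Nat.choose (n+q) (2*q+1) : ℤ) := by
    intro q _
    have h : n+1+q = (n+q)+1 := by omega
    rw [h, Nat.choose_succ_succ]
    push_cast; ring
  rw [Finset.sum_congr rfl this, Finset.sum_add_distrib]
  rfl

lemma Hq2 (n : ℕ) :
    ∑ q ∈ Finset.range (n+1), (2:ℤ)^(n-q) * (Nat.choose (n+1+q) (2*q+2) : ℤ)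
      = 2 * az n - 2^(n+1) := by
  have h0 : (Nat.choose (n+(n+1)) (2*(n+1)) : ℤ) = 0 := by
    rw [Nat.choose_eq_zero_of_lt (by omega)]; rfl
  have key := range_trick n (fun p => (2:ℤ)^(n+1-p) * (Nat.choose (n+p) (2*p) : ℤ))
    (by beta_reduce; rw [h0, mul_zero])
  beta_reduce at key
  have e1 : ∑ q ∈ Finset.range (n+1), (2:ℤ)^(n-q) * (Nat.choose (n+1+q) (2*q+2) : ℤ)
      = ∑ q ∈ Finset.range (n+1), (2:ℤ)^(n+1-(q+1)) * (Nat.choose (n+(q+1)) (2*(q+1)) : ℤ) := by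
    refine Finset.sum_congr rfl fun q hq => ?_
    have a1 : n+1-(q+1) = n-q := by omega
    have a2 : n+(q+1) = n+1+q := by omega
    have a3 : 2*(q+1) = 2*q+2 := by omega
    rw [a1, a2, a3]
  rw [e1, key, double_sum']
  simp [az]

lemma Hq2w (n : ℕ) :
    ∑ q ∈ Finset.range (n+1), ((q:ℤ)+1) * (2:ℤ)^(n-q) * (Nat.choose (n+1+q) (2*q+2) : ℤ)
      = 2 * bz n := by
  have h0 : (Nat.choose (n+(n+1)) (2*(n+1)) : ℤ) = 0 := by
    rw [Nat.choose_eq_zero_of_lt (by omega)]; rfl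
  have key := range_trick n (fun p => (p:ℤ) * (2:ℤ)^(n+1-p) * (Nat.choose (n+p) (2*p) : ℤ))
    (by beta_reduce; rw [h0, mul_zero])
  beta_reduce at key
  have e1 : ∑ q ∈ Finset.range (n+1), ((q:ℤ)+1) * (2:ℤ)^(n-q) * (Nat.choose (n+1+q) (2*q+2) : ℤ)
      = ∑ q ∈ Finset.range (n+1),
          ((q+1 : ℕ):ℤ) * (2:ℤ)^(n+1-(q+1)) * (Nat.choose (n+(q+1)) (2*(q+1)) : ℤ) := by
    refine Finset.sum_congr rfl fun q hq => ?_
    have a1 : n+1-(q+1) = n-q := by omega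
    have a2 : n+(q+1) = n+1+q := by omega
    have a3 : 2*(q+1) = 2*q+2 := by omega
    rw [a1, a2, a3]; push_cast; ring
  rw [e1, key, double_sumw']
  simp [bz]

lemma aRec (n : ℕ) : az (n+1) = 3 * az n + dz n := by
  rw [az, Finset.sum_range_succ']
  have e1 : ∀ q ∈ Finset.range (n+1),
      (2:ℤ)^(n+1-(q+1)) * (Nat.choose (n+1+(q+1)) (2*(q+1)) : ℤ)
        = 2^(n-q) * (Nat.choose (n+1+q) (2*q+1) : ℤ)
          + 2^(n-q) * (Nat.choose (n+1+q) (2*q+2) : ℤ) := by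
    intro q _
    have a1 : n+1-(q+1) = n-q := by omega
    have a2 : n+1+(q+1) = (n+1+q)+1 := by omega
    have a3 : 2*(q+1) = (2*q+1)+1 := by omega
    rw [a1, a2, a3, Nat.choose_succ_succ]
    push_cast; ring
  rw [Finset.sum_congr rfl e1, Finset.sum_add_distrib, Hq1, Hq2]
  simp
  ring

lemma dRec (n : ℕ) : dz (n+1) = 2 * az n + 2 * dz n := by
  rw [dz]
  have e1 : ∀ p ∈ Finset.range (n+1+1),
      (2:ℤ)^(n+1-p) * (Nat.choose (n+1+p) (2*p+1) : ℤ)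
        = 2^(n+1-p) * (Nat.choose (n+p) (2*p) : ℤ)
          + 2^(n+1-p) * (Nat.choose (n+p) (2*p+1) : ℤ) := by
    intro p _
    have a2 : n+1+p = (n+p)+1 := by omega
    rw [a2, Nat.choose_succ_succ]
    push_cast; ring
  rw [Finset.sum_congr rfl e1, Finset.sum_add_distrib,
    double_sum n _ (by rw [Nat.choose_eq_zero_of_lt (by omega)]; rfl),
    double_sum n _ (by rw [Nat.choose_eq_zero_of_lt (by omega)]; rfl)]
  rw [az, dz]

lemma bRec (n : ℕ) : bz (n+1) = 3 * bz n + az n + dz n + ez n := by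
  rw [bz, Finset.sum_range_succ']
  have e1 : ∀ q ∈ Finset.range (n+1),
      ((q+1 : ℕ):ℤ) * (2:ℤ)^(n+1-(q+1)) * (Nat.choose (n+1+(q+1)) (2*(q+1)) : ℤ)
        = ((q:ℤ) * 2^(n-q) * (Nat.choose (n+1+q) (2*q+1) : ℤ)
            + 2^(n-q) * (Nat.choose (n+1+q) (2*q+1) : ℤ))
          + ((q:ℤ)+1) * 2^(n-q) * (Nat.choose (n+1+q) (2*q+2) : ℤ) := by
    intro q _
    have a1 : n+1-(q+1) = n-q := by omega
    have a2 : n+1+(q+1) = (n+1+q)+1 := by omega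
    have a3 : 2*(q+1) = (2*q+1)+1 := by omega
    rw [a1, a2, a3, Nat.choose_succ_succ]
    push_cast; ring
  rw [Finset.sum_congr rfl e1, Finset.sum_add_distrib, Finset.sum_add_distrib,
    Hq1, Hq1w, Hq2w]
  simp
  ring

lemma eRec (n : ℕ) : ez (n+1) = 2 * bz n + 2 * ez n := by
  rw [ez]
  have e1 : ∀ p ∈ Finset.range (n+1+1),
      (p:ℤ) * (2:ℤ)^(n+1-p) * (Nat.choose (n+1+p) (2*p+1) : ℤ)
        = (p:ℤ) * 2^(n+1-p) * (Nat.choose (n+p) (2*p) : ℤ)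
          + (p:ℤ) * 2^(n+1-p) * (Nat.choose (n+p) (2*p+1) : ℤ) := by
    intro p _
    have a2 : n+1+p = (n+p)+1 := by omega
    rw [a2, Nat.choose_succ_succ]
    push_cast; ring
  rw [Finset.sum_congr rfl e1, Finset.sum_add_distrib,
    double_sumw n _ (by rw [Nat.choose_eq_zero_of_lt (by omega)]; rfl),
    double_sumw n _ (by rw [Nat.choose_eq_zero_of_lt (by omega)]; rfl)]
  rw [bz, ez]

lemma closed (n : ℕ) :
    3 * az n = 2*4^n+1 ∧ 3 * dz n = 2*4^n-2 ∧
    27 * bz n = (6*(n:ℤ)+2)*4^n-3*n-2 ∧ 27 * ez n = (6*(n:ℤ)-10)*4^n+6*n+10 := by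
  induction n with
  | zero => simp [az, dz, bz, ez]
  | succ n ih =>
    obtain ⟨h1, h2, h3, h4⟩ := ih
    rw [aRec, dRec, bRec, eRec]
    push_cast
    refine ⟨by linear_combination 3*h1 + h2, by linear_combination 2*h1 + 2*h2,
      by linear_combination 3*h3 + 9*h1 + 9*h2 + h4, by linear_combination 2*h3 + 2*h4⟩

/-- Second sum in the case `c ≡ 3 (mod 4)` (`k = 2n+1`): for every `n ≥ 0`,
`27 * ∑_{p=0}^{n} (4p+1) * 2^(n-p) * C(n+p, 2p) = (24n+26) * 4^n - 12n + 1`. -/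
theorem second_sum_three_mod_four (n : ℕ) :
    27 * ∑ p ∈ Finset.range (n + 1),
        (4 * (p : ℤ) + 1) * 2 ^ (n - p) * (Nat.choose (n + p) (2 * p) : ℤ)
      = (24 * (n : ℤ) + 26) * 4 ^ n - 12 * (n : ℤ) + 1 := by
  obtain ⟨h1, _, h3, _⟩ := closed n
  have hsum : ∑ p ∈ Finset.range (n + 1),
      (4 * (p : ℤ) + 1) * 2 ^ (n - p) * (Nat.choose (n + p) (2 * p) : ℤ)
      = 4 * bz n + az n := by
    have : ∀ p ∈ Finset.range (n+1),
        (4 * (p : ℤ) + 1) * 2 ^ (n - p) * (Nat.choose (n + p) (2 * p) : ℤ)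
        = 4 * ((p:ℤ) * 2^(n-p) * (Nat.choose (n+p) (2*p) : ℤ))
          + 2^(n-p) * (Nat.choose (n+p) (2*p) : ℤ) := by
      intro p _; ring
    rw [Finset.sum_congr rfl this, Finset.sum_add_distrib, ← Finset.mul_sum]
    rfl
  rw [hsum]
  linear_combination 4*h3 + 9*h1
end

section
/- For every integer n ≥ 0, setting k = 2n+1 and c = 4n+3, one has (2k−1)/2 + (1/2)·∑_{l=0}^{k-1} (2l+1)·2^{k−l−1}·C(k+l, 2l+1) + ∑_{p=0}^{n} (4p+1)·2^{n−p}·C(n+p, 2p) = (1/27)·((3c−4)·2^{c−2} + (3c+4)·2^{(c−1)/2} + 12c − 18). (The left-hand side is the total number of sign changes, summed over all two-bridge knots with crossing number c ≡ 3 (mod 4).) -/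
open Finset

def Af (n : ℕ) : ℚ := ∑ p ∈ range (n+1), ((n+p).choose (2*p) : ℚ) / 2^p
def Gf (n : ℕ) : ℚ := ∑ p ∈ range (n+1), ((n+1+p).choose (2*p+1) : ℚ) / 2^p
def A1f (n : ℕ) : ℚ := ∑ p ∈ range (n+1), (p : ℚ) * ((n+p).choose (2*p) : ℚ) / 2^p
def G1f (n : ℕ) : ℚ := ∑ p ∈ range (n+1), (p : ℚ) * ((n+1+p).choose (2*p+1) : ℚ) / 2^p

lemma Af_aux (n : ℕ) :
    ∑ q ∈ range (n+1), ((n+1+q).choose (2*q+2) : ℚ) / 2^(q+1) = Af n - 1 := by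
  have h := Finset.sum_range_succ' (fun r => ((n+r).choose (2*r) : ℚ) / 2^r) (n+1)
  have h2 : ∑ r ∈ range (n+1+1), ((n+r).choose (2*r) : ℚ) / 2^r
      = Af n + ((n+(n+1)).choose (2*(n+1)) : ℚ) / 2^(n+1) :=
    Finset.sum_range_succ _ (n+1)
  have h3 : (n+(n+1)).choose (2*(n+1)) = 0 := Nat.choose_eq_zero_of_lt (by omega)
  rw [h2, h3] at h
  simp only [Nat.cast_zero, zero_div, add_zero, Nat.mul_zero, Nat.add_zero, Nat.choose_zero_right,
    Nat.cast_one, pow_zero, div_one] at h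
  calc ∑ q ∈ range (n+1), ((n+1+q).choose (2*q+2) : ℚ) / 2^(q+1)
      = ∑ q ∈ range (n+1), ((n+(q+1)).choose (2*(q+1)) : ℚ) / 2^(q+1) := by
        apply Finset.sum_congr rfl; intro q _
        rw [show n+1+q = n+(q+1) from by omega, show 2*q+2 = 2*(q+1) from by omega]
    _ = Af n - 1 := by linarith [h]

lemma A1f_aux (n : ℕ) :
    ∑ q ∈ range (n+1), ((q:ℚ)+1) * ((n+1+q).choose (2*q+2) : ℚ) / 2^(q+1) = A1f n := by
  have h := Finset.sum_range_succ' (fun r => (r:ℚ) * ((n+r).choose (2*r) : ℚ) / 2^r) (n+1)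
  have h2 : ∑ r ∈ range (n+1+1), (r:ℚ) * ((n+r).choose (2*r) : ℚ) / 2^r
      = A1f n + ((n+1:ℕ):ℚ) * ((n+(n+1)).choose (2*(n+1)) : ℚ) / 2^(n+1) :=
    Finset.sum_range_succ _ (n+1)
  have h3 : (n+(n+1)).choose (2*(n+1)) = 0 := Nat.choose_eq_zero_of_lt (by omega)
  rw [h2, h3] at h
  simp only [Nat.cast_zero, zero_div, add_zero, zero_mul, mul_zero, Nat.cast_ofNat,
    Nat.cast_add, Nat.cast_one, pow_zero, div_one] at h
  calc ∑ q ∈ range (n+1), ((q:ℚ)+1) * ((n+1+q).choose (2*q+2) : ℚ) / 2^(q+1)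
      = ∑ q ∈ range (n+1), ((q:ℚ)+1) * ((n+(q+1)).choose (2*(q+1)) : ℚ) / 2^(q+1) := by
        apply Finset.sum_congr rfl; intro q _
        rw [show n+1+q = n+(q+1) from by omega, show 2*q+2 = 2*(q+1) from by omega]
    _ = A1f n := by linarith [h]

lemma recA_s12 (n : ℕ) : Af (n+1) = Af n + Gf n / 2 := by
  have h := Finset.sum_range_succ' (fun p => ((n+1+p).choose (2*p) : ℚ) / 2^p) (n+1)
  have hpas : ∀ q, ((n+1+(q+1)).choose (2*(q+1)) : ℚ)
      = ((n+1+q).choose (2*q+1) : ℚ) + ((n+1+q).choose (2*q+2) : ℚ) := by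
    intro q
    rw [show n+1+(q+1) = (n+1+q)+1 from by omega, show 2*(q+1) = (2*q+1)+1 from by omega,
      Nat.choose_succ_succ]
    push_cast; ring
  rw [Af]
  rw [h]
  simp only [hpas]
  have : ∑ q ∈ range (n+1), (((n+1+q).choose (2*q+1) : ℚ) + ((n+1+q).choose (2*q+2) : ℚ)) / 2^(q+1)
      = (∑ q ∈ range (n+1), ((n+1+q).choose (2*q+1) : ℚ) / 2^q) / 2
        + ∑ q ∈ range (n+1), ((n+1+q).choose (2*q+2) : ℚ) / 2^(q+1) := by
    rw [Finset.sum_div, ← Finset.sum_add_distrib]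
    apply Finset.sum_congr rfl; intro q _
    rw [pow_succ]; ring
  rw [this, Af_aux]
  rw [Gf]
  simp
  ring

lemma recG (n : ℕ) : Gf (n+1) = Af (n+1) + Gf n := by
  have hpas : ∀ p, ((n+1+1+p).choose (2*p+1) : ℚ)
      = ((n+1+p).choose (2*p) : ℚ) + ((n+1+p).choose (2*p+1) : ℚ) := by
    intro p
    rw [show n+1+1+p = (n+1+p)+1 from by omega, show 2*p+1 = (2*p)+1 from rfl,
      Nat.choose_succ_succ]
    push_cast; ring
  rw [Gf, Af]
  simp only [hpas, add_div, Finset.sum_add_distrib]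
  congr 1
  rw [Finset.sum_range_succ, show (n+1+(n+1)).choose (2*(n+1)+1) = 0 from
    Nat.choose_eq_zero_of_lt (by omega)]
  rw [Gf]
  simp

lemma recA1 (n : ℕ) : A1f (n+1) = A1f n + (G1f n + Gf n) / 2 := by
  have h := Finset.sum_range_succ' (fun p => (p:ℚ) * ((n+1+p).choose (2*p) : ℚ) / 2^p) (n+1)
  have hpas : ∀ q:ℕ, ((n+1+(q+1)).choose (2*(q+1)) : ℚ)
      = ((n+1+q).choose (2*q+1) : ℚ) + ((n+1+q).choose (2*q+2) : ℚ) := by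
    intro q
    rw [show n+1+(q+1) = (n+1+q)+1 from by omega, show 2*(q+1) = (2*q+1)+1 from by omega,
      Nat.choose_succ_succ]
    push_cast; ring
  rw [A1f, h]
  simp only [hpas]
  have key : ∑ q ∈ range (n+1), ((q+1:ℕ):ℚ) *
        (((n+1+q).choose (2*q+1) : ℚ) + ((n+1+q).choose (2*q+2) : ℚ)) / 2^(q+1)
      = ((∑ q ∈ range (n+1), (q:ℚ) * ((n+1+q).choose (2*q+1) : ℚ) / 2^q)
          + (∑ q ∈ range (n+1), ((n+1+q).choose (2*q+1) : ℚ) / 2^q)) / 2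
        + ∑ q ∈ range (n+1), ((q:ℚ)+1) * ((n+1+q).choose (2*q+2) : ℚ) / 2^(q+1) := by
    rw [← Finset.sum_add_distrib, Finset.sum_div, ← Finset.sum_add_distrib]
    apply Finset.sum_congr rfl; intro q _
    push_cast
    rw [pow_succ]; ring
  rw [key, A1f_aux, G1f, Gf]
  simp
  ring

lemma recG1 (n : ℕ) : G1f (n+1) = A1f (n+1) + G1f n := by
  have hpas : ∀ p, ((n+1+1+p).choose (2*p+1) : ℚ)
      = ((n+1+p).choose (2*p) : ℚ) + ((n+1+p).choose (2*p+1) : ℚ) := by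
    intro p
    rw [show n+1+1+p = (n+1+p)+1 from by omega, show 2*p+1 = (2*p)+1 from rfl,
      Nat.choose_succ_succ]
    push_cast; ring
  rw [G1f, A1f]
  have : ∀ p ∈ range (n+1+1), (p:ℚ) * ((n+1+1+p).choose (2*p+1) : ℚ) / 2^p
      = (p:ℚ) * ((n+1+p).choose (2*p) : ℚ) / 2^p
        + (p:ℚ) * ((n+1+p).choose (2*p+1) : ℚ) / 2^p := by
    intro p _; rw [hpas]; ring
  rw [Finset.sum_congr rfl this, Finset.sum_add_distrib]
  congr 1
  rw [Finset.sum_range_succ, show (n+1+(n+1)).choose (2*(n+1)+1) = 0 from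
    Nat.choose_eq_zero_of_lt (by omega)]
  rw [G1f]
  simp

lemma closAG (n : ℕ) : Af n = (2*4^n+1)/(3*2^n) ∧ Gf n = (4*4^n-1)/(3*2^n) := by
  induction n with
  | zero =>
    constructor
    · rw [Af]; simp [Finset.sum_range_succ]; norm_num
    · rw [Gf]; simp [Finset.sum_range_succ]; norm_num
  | succ n ih =>
    obtain ⟨hA, hG⟩ := ih
    have h2 : (2:ℚ)^n ≠ 0 := by positivity
    have hA' : Af (n+1) = (2*4^(n+1)+1)/(3*2^(n+1)) := by
      rw [recA_s12, hA, hG]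
      field_simp
      ring
    refine ⟨hA', ?_⟩
    rw [recG, hA', hG]
    field_simp
    ring

lemma closA1G1 (n : ℕ) : A1f n = ((6*n+2)*4^n-3*n-2)/(27*2^n)
    ∧ G1f n = ((12*n-8)*4^n+3*n+8)/(27*2^n) := by
  induction n with
  | zero =>
    constructor
    · rw [A1f]; simp [Finset.sum_range_succ]
    · rw [G1f]; simp [Finset.sum_range_succ]
  | succ n ih =>
    obtain ⟨hA, hG⟩ := ih
    have hGf : Gf n = (4*4^n-1)/(3*2^n) := (closAG n).2
    have h2 : (2:ℚ)^n ≠ 0 := by positivity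
    have hA' : A1f (n+1) = ((6*(n:ℚ)+8)*4^(n+1)-3*(n:ℚ)-5)/(27*2^(n+1)) := by
      rw [recA1, hA, hG, hGf]
      field_simp
      ring
    constructor
    · rw [hA']; push_cast; ring_nf
    · rw [recG1, hA', hG]
      push_cast
      field_simp
      ring

/-- Total "sign change" for crossing number `c ≡ 3 (mod 4)`: for every `n ≥ 0`,
with `k = 2n+1` and `c = 4n+3`,
`(2k-1)/2 + (1/2) * ∑_{l=0}^{k-1} (2l+1) * 2^(k-l-1) * C(k+l, 2l+1)
  + ∑_{p=0}^{n} (4p+1) * 2^(n-p) * C(n+p, 2p)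
  = (1/27) * ((3c-4) * 2^(c-2) + (3c+4) * 2^((c-1)/2) + 12c - 18)`. -/
theorem total_sign_change_three_mod_four (n k c : ℕ)
    (hk : k = 2 * n + 1) (hc : c = 4 * n + 3) :
    (2 * (k : ℚ) - 1) / 2
      + (1 / 2) * ∑ l ∈ Finset.range k,
          (2 * (l : ℚ) + 1) * 2 ^ (k - l - 1) * (Nat.choose (k + l) (2 * l + 1) : ℚ)
      + ∑ p ∈ Finset.range (n + 1),
          (4 * (p : ℚ) + 1) * 2 ^ (n - p) * (Nat.choose (n + p) (2 * p) : ℚ)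
    = (1 / 27) * ((3 * (c : ℚ) - 4) * 2 ^ (c - 2)
        + (3 * (c : ℚ) + 4) * 2 ^ ((c - 1) / 2) + 12 * (c : ℚ) - 18) := by
  subst hk hc
  have hS2 : ∑ p ∈ Finset.range (n + 1),
      (4 * (p : ℚ) + 1) * 2 ^ (n - p) * (Nat.choose (n + p) (2 * p) : ℚ)
      = 2^n * (4 * A1f n + Af n) := by
    have h1 : 4 * A1f n + Af n = ∑ p ∈ range (n+1),
        (4 * (p:ℚ) * ((n+p).choose (2*p) : ℚ) + ((n+p).choose (2*p) : ℚ)) / 2^p := by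
      rw [A1f, Af, Finset.mul_sum, ← Finset.sum_add_distrib]
      apply Finset.sum_congr rfl; intro p _; ring
    rw [h1, Finset.mul_sum]
    apply Finset.sum_congr rfl; intro p hp
    have hple : p ≤ n := by
      have := Finset.mem_range.mp hp; omega
    rw [pow_sub₀ (2:ℚ) two_ne_zero hple]
    have hp2 : (2:ℚ)^p ≠ 0 := by positivity
    field_simp
  have hS1 : ∑ l ∈ Finset.range (2 * n + 1),
      (2 * (l : ℚ) + 1) * 2 ^ (2 * n + 1 - l - 1) * (Nat.choose (2 * n + 1 + l) (2 * l + 1) : ℚ)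
      = 2^(2*n) * (2 * G1f (2*n) + Gf (2*n)) := by
    have h1 : 2 * G1f (2*n) + Gf (2*n) = ∑ l ∈ range (2*n+1),
        (2 * (l:ℚ) * ((2*n+1+l).choose (2*l+1) : ℚ) + ((2*n+1+l).choose (2*l+1) : ℚ)) / 2^l := by
      rw [G1f, Gf, Finset.mul_sum, ← Finset.sum_add_distrib]
      apply Finset.sum_congr rfl; intro l _; ring
    rw [h1, Finset.mul_sum]
    apply Finset.sum_congr rfl; intro l hl
    have hle : l ≤ 2*n := by
      have := Finset.mem_range.mp hl; omega
    rw [show 2*n+1-l-1 = 2*n-l from by omega, pow_sub₀ (2:ℚ) two_ne_zero hle]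
    have hl2 : (2:ℚ)^l ≠ 0 := by positivity
    field_simp
  rw [hS1, hS2, (closAG n).1, (closAG (2*n)).2, (closA1G1 n).1, (closA1G1 (2*n)).2,
    show 4*n+3-2 = 4*n+1 from by omega, show (4*n+3-1)/2 = 2*n+1 from by omega]
  have e1 : (2:ℚ)^(2*n) = 2^n * 2^n := by rw [two_mul, pow_add]
  have e2 : (2:ℚ)^(4*n+1) = 2 * (2^n * 2^n * (2^n * 2^n)) := by
    rw [show 4*n+1 = n+n+n+n+1 from by ring, pow_add, pow_add, pow_add, pow_add, pow_one]; ring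
  have e3 : (2:ℚ)^(2*n+1) = 2 * (2^n * 2^n) := by
    rw [pow_succ, e1]; ring
  have e4 : (4:ℚ)^n = 2^n * 2^n := by
    rw [show (4:ℚ) = 2*2 from by norm_num, mul_pow]
  have e5 : (4:ℚ)^(2*n) = 2^n * 2^n * (2^n * 2^n) := by
    rw [show (4:ℚ) = 2*2 from by norm_num, mul_pow, e1]
  rw [e1, e2, e3, e4, e5]
  have h2 : (2:ℚ)^n ≠ 0 := by positivity
  push_cast
  field_simp
  ring
end

section
/- Let m ≥ 1 and let a = (a_1, …, a_{2m}) be a sequence of nonzero integers. Then B(a) = 3 if and only if one of the following holds: (type 3a) there exists an index i_0 with |a_{i_0}| = 2, |a_i| = 1 for all i ≠ i_0, and a_i · a_{i+1} < 0 for all 1 ≤ i ≤ 2m−1; or (type 3b) |a_i| = 1 for all i and there exists an index i_0 with a_{i_0} · a_{i_0+1} > 0 and a_i · a_{i+1} < 0 for all i ≠ i_0, 1 ≤ i ≤ 2m−1. -/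
/-- The number of sign changes of the sequence `a 0, a 1, …, a (N-1)`:
the number of indices `i` with `0 ≤ i ≤ N - 2` and `a i * a (i+1) < 0`. -/
def signChanges (N : ℕ) (a : ℕ → ℤ) : ℕ :=
  ((Finset.range (N - 1)).filter (fun i => a i * a (i + 1) < 0)).card

/-- The braid index `B(a) = (∑ |a i|) - t(a) + 1` of the sequence `a 0, …, a (N-1)`;
for a reduced even continued fraction `(2 a 0, …, 2 a (2m-1))` this is the braid index
of the corresponding two-bridge knot. -/
def braidB (N : ℕ) (a : ℕ → ℤ) : ℤ :=
  (∑ i ∈ Finset.range N, |a i|) - (signChanges N a : ℤ) + 1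

/-- Lemma 4.4: a two-bridge knot with reduced even continued fraction
`(2a_1, …, 2a_{2m})` has braid index `3` if and only if it is of type `3a` or
of type `3b`. -/
theorem braid_index_eq_three_iff (m : ℕ) (hm : 1 ≤ m) (a : ℕ → ℤ)
    (ha : ∀ i < 2 * m, a i ≠ 0) :
    braidB (2 * m) a = 3 ↔
      -- type 3a
      (∃ i₀ < 2 * m, |a i₀| = 2 ∧ (∀ i < 2 * m, i ≠ i₀ → |a i| = 1) ∧
        (∀ i < 2 * m - 1, a i * a (i + 1) < 0)) ∨
      -- type 3b
      ((∀ i < 2 * m, |a i| = 1) ∧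
        ∃ i₀ < 2 * m - 1, 0 < a i₀ * a (i₀ + 1) ∧
          (∀ i < 2 * m - 1, i ≠ i₀ → a i * a (i + 1) < 0)) := by
  have habs : ∀ i ∈ Finset.range (2 * m), (1 : ℤ) ≤ |a i| := fun i hi =>
    Int.one_le_abs (ha i (Finset.mem_range.mp hi))
  have hsum_ge : (2 * m : ℤ) ≤ ∑ i ∈ Finset.range (2 * m), |a i| := by
    calc (2 * m : ℤ) = ∑ _i ∈ Finset.range (2 * m), (1 : ℤ) := by simp
      _ ≤ _ := Finset.sum_le_sum habs
  have ht_le : signChanges (2 * m) a ≤ 2 * m - 1 := by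
    unfold signChanges
    exact (Finset.card_filter_le _ _).trans (by simp)
  rw [braidB]
  constructor
  · intro h
    have hcases : ((∑ i ∈ Finset.range (2 * m), |a i|) = 2 * m + 1 ∧
        signChanges (2 * m) a = 2 * m - 1) ∨
        ((∑ i ∈ Finset.range (2 * m), |a i|) = 2 * m ∧
        signChanges (2 * m) a = 2 * m - 2) := by omega
    rcases hcases with ⟨hS, hT⟩ | ⟨hS, hT⟩
    · -- type 3a
      left
      have hex : ∃ i₀ ∈ Finset.range (2 * m), 2 ≤ |a i₀| := by
        by_contra hc
        push_neg at hc
        have hle : (∑ i ∈ Finset.range (2 * m), |a i|) ≤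
            ∑ _i ∈ Finset.range (2 * m), (1 : ℤ) :=
          Finset.sum_le_sum (fun i hi => by have := hc i hi; omega)
        simp at hle
        omega
      obtain ⟨i₀, hmem, hi₀2⟩ := hex
      have hsplit := Finset.add_sum_erase _ (fun i => |a i|) hmem
      have herase_ge : (2 * m - 1 : ℤ) ≤ ∑ j ∈ (Finset.range (2 * m)).erase i₀, |a j| := by
        calc (2 * m - 1 : ℤ) = ∑ _j ∈ (Finset.range (2 * m)).erase i₀, (1 : ℤ) := by
              simp [Finset.card_erase_of_mem hmem]
              push_cast
              omega
          _ ≤ _ := Finset.sum_le_sum (fun j hj => habs j (Finset.mem_of_mem_erase hj))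
      have h2 : |a i₀| = 2 := by omega
      have herase_eq : ∑ j ∈ (Finset.range (2 * m)).erase i₀, |a j| = (2 * m : ℤ) - 1 := by
        omega
      have hz : ∑ j ∈ (Finset.range (2 * m)).erase i₀, (|a j| - 1) = 0 := by
        rw [Finset.sum_sub_distrib, herase_eq]
        simp [Finset.card_erase_of_mem hmem]
        push_cast
        omega
      have hall1 : ∀ j ∈ (Finset.range (2 * m)).erase i₀, |a j| = 1 := by
        intro j hj
        have := (Finset.sum_eq_zero_iff_of_nonneg
          (fun j hj => by have := habs j (Finset.mem_of_mem_erase hj); omega)).mp hz j hj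
        omega
      have hfilt : (Finset.range (2 * m - 1)).filter (fun i => a i * a (i + 1) < 0) =
          Finset.range (2 * m - 1) := by
        apply Finset.eq_of_subset_of_card_le (Finset.filter_subset _ _)
        rw [Finset.card_range]
        unfold signChanges at hT
        omega
      refine ⟨i₀, Finset.mem_range.mp hmem, h2, ?_, ?_⟩
      · intro i hi hne
        exact hall1 i (Finset.mem_erase.mpr ⟨hne, Finset.mem_range.mpr hi⟩)
      · intro i hi
        have hmem' : i ∈ (Finset.range (2 * m - 1)).filter
            (fun i => a i * a (i + 1) < 0) := by
          rw [hfilt]; exact Finset.mem_range.mpr hi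
        exact (Finset.mem_filter.mp hmem').2
    · -- type 3b
      right
      have hz : ∑ j ∈ Finset.range (2 * m), (|a j| - 1) = 0 := by
        rw [Finset.sum_sub_distrib, hS]
        simp
      have hall1 : ∀ i < 2 * m, |a i| = 1 := by
        intro i hi
        have := (Finset.sum_eq_zero_iff_of_nonneg
          (fun j hj => by have := habs j hj; omega)).mp hz i (Finset.mem_range.mpr hi)
        omega
      have hcard : ((Finset.range (2 * m - 1)).filter
          (fun i => ¬ a i * a (i + 1) < 0)).card = 1 := by
        have := Finset.card_filter_add_card_filter_not
          (s := Finset.range (2 * m - 1)) (fun i => a i * a (i + 1) < 0)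
        unfold signChanges at hT
        rw [Finset.card_range] at this
        omega
      obtain ⟨i₀, hsing⟩ := Finset.card_eq_one.mp hcard
      have hi₀mem : i₀ ∈ (Finset.range (2 * m - 1)).filter
          (fun i => ¬ a i * a (i + 1) < 0) := by rw [hsing]; simp
      obtain ⟨hi₀r, hi₀n⟩ := Finset.mem_filter.mp hi₀mem
      have hi₀lt : i₀ < 2 * m - 1 := Finset.mem_range.mp hi₀r
      have hne0 : a i₀ * a (i₀ + 1) ≠ 0 :=
        mul_ne_zero (ha i₀ (by omega)) (ha (i₀ + 1) (by omega))
      refine ⟨hall1, i₀, hi₀lt, lt_of_le_of_ne (not_lt.mp hi₀n) (Ne.symm hne0), ?_⟩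
      intro i hi hne
      by_contra hcon
      have : i ∈ (Finset.range (2 * m - 1)).filter
          (fun i => ¬ a i * a (i + 1) < 0) :=
        Finset.mem_filter.mpr ⟨Finset.mem_range.mpr hi, hcon⟩
      rw [hsing] at this
      exact hne (Finset.mem_singleton.mp this)
  · rintro (⟨i₀, hi₀, h2, h1, hP⟩ | ⟨h1, i₀, hi₀, hpos, hP⟩)
    · have hmem : i₀ ∈ Finset.range (2 * m) := Finset.mem_range.mpr hi₀
      have hsplit := Finset.add_sum_erase _ (fun i => |a i|) hmem
      have herase : ∑ j ∈ (Finset.range (2 * m)).erase i₀, |a j| = (2 * m : ℤ) - 1 := by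
        rw [Finset.sum_congr rfl (fun j hj => h1 j
          (Finset.mem_range.mp (Finset.mem_of_mem_erase hj)) (Finset.mem_erase.mp hj).1)]
        simp [Finset.card_erase_of_mem hmem]
        push_cast
        omega
      have hS : (∑ i ∈ Finset.range (2 * m), |a i|) = 2 * m + 1 := by
        rw [← hsplit]; rw [h2, herase]; ring
      have hT : signChanges (2 * m) a = 2 * m - 1 := by
        unfold signChanges
        rw [Finset.filter_true_of_mem (fun i hi => hP i (Finset.mem_range.mp hi))]
        simp
      rw [hS, hT]
      push_cast
      omega
    · have hS : (∑ i ∈ Finset.range (2 * m), |a i|) = 2 * m := by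
        rw [Finset.sum_congr rfl (fun j hj => h1 j (Finset.mem_range.mp hj))]
        simp
      have hfilt : (Finset.range (2 * m - 1)).filter (fun i => a i * a (i + 1) < 0) =
          (Finset.range (2 * m - 1)).erase i₀ := by
        ext i
        rw [Finset.mem_filter, Finset.mem_erase, Finset.mem_range]
        constructor
        · rintro ⟨hi, hlt⟩
          refine ⟨?_, hi⟩
          rintro rfl
          exact absurd hpos (not_lt.mpr hlt.le)
        · rintro ⟨hne, hi⟩
          exact ⟨hi, hP i hi hne⟩
      have hT : signChanges (2 * m) a = 2 * m - 2 := by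
        unfold signChanges
        rw [hfilt, Finset.card_erase_of_mem (Finset.mem_range.mpr hi₀), Finset.card_range]
        omega
      rw [hS, hT]
      push_cast
      omega
end

section
/- Let m ≥ 1 and let a = (a_1, …, a_{2m}) be a sequence of nonzero integers. Then B(a) = 4 if and only if one of the following holds: (type 4a) there exists i_0 with |a_{i_0}| = 3, |a_i| = 1 for all i ≠ i_0, and a_i · a_{i+1} < 0 for all 1 ≤ i ≤ 2m−1; (type 4b) there exist i_0 ≠ i_1 with |a_{i_0}| = |a_{i_1}| = 2, |a_i| = 1 for all i ≠ i_0, i_1, and a_i · a_{i+1} < 0 for all 1 ≤ i ≤ 2m−1; (type 4c) there exist i_0 and i_1 (possibly equal) with |a_{i_0}| = 2, |a_i| = 1 for all i ≠ i_0, a_{i_1} · a_{i_1+1} > 0, and a_i · a_{i+1} < 0 for all i ≠ i_1, 1 ≤ i ≤ 2m−1; or (type 4d) |a_i| = 1 for all i and there exist i_0 < i_1 with a_{i_0} · a_{i_0+1} > 0, a_{i_1} · a_{i_1+1} > 0, and a_i · a_{i+1} < 0 for all i ≠ i_0, i_1, 1 ≤ i ≤ 2m−1. -/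
lemma sum_eq_one_cases {s : Finset ℕ} {f : ℕ → ℕ} (h : ∑ i ∈ s, f i = 1) :
    ∃ i ∈ s, f i = 1 ∧ ∀ j ∈ s, j ≠ i → f j = 0 := by
  obtain ⟨i, hi, hne⟩ : ∃ i ∈ s, f i ≠ 0 := by
    by_contra hc
    push_neg at hc
    rw [Finset.sum_eq_zero hc] at h
    exact absurd h (by norm_num)
  have hle : f i ≤ 1 := h ▸ Finset.single_le_sum (fun j _ => Nat.zero_le _) hi
  have hsum := Finset.add_sum_erase s f hi
  refine ⟨i, hi, by omega, fun j hj hji => ?_⟩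
  have hrest : ∑ k ∈ s.erase i, f k = 0 := by omega
  exact (Finset.sum_eq_zero_iff.mp hrest) j (Finset.mem_erase.mpr ⟨hji, hj⟩)

lemma sum_eq_two_cases {s : Finset ℕ} {f : ℕ → ℕ} (h : ∑ i ∈ s, f i = 2) :
    (∃ i ∈ s, f i = 2 ∧ ∀ j ∈ s, j ≠ i → f j = 0) ∨
    (∃ i ∈ s, ∃ j ∈ s, i ≠ j ∧ f i = 1 ∧ f j = 1 ∧
      ∀ k ∈ s, k ≠ i → k ≠ j → f k = 0) := by
  obtain ⟨i, hi, hne⟩ : ∃ i ∈ s, f i ≠ 0 := by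
    by_contra hc
    push_neg at hc
    rw [Finset.sum_eq_zero hc] at h
    exact absurd h (by norm_num)
  have hle : f i ≤ 2 := h ▸ Finset.single_le_sum (fun j _ => Nat.zero_le _) hi
  have hsum := Finset.add_sum_erase s f hi
  rcases (by omega : f i = 2 ∨ f i = 1) with h2 | h1
  · left
    refine ⟨i, hi, h2, fun j hj hji => ?_⟩
    have hrest : ∑ k ∈ s.erase i, f k = 0 := by omega
    exact (Finset.sum_eq_zero_iff.mp hrest) j (Finset.mem_erase.mpr ⟨hji, hj⟩)
  · right
    have hrest : ∑ k ∈ s.erase i, f k = 1 := by omega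
    obtain ⟨j, hj, hfj, hz⟩ := sum_eq_one_cases hrest
    obtain ⟨hji, hjs⟩ := Finset.mem_erase.mp hj
    refine ⟨i, hi, j, hjs, hji.symm, h1, hfj, fun k hk hki hkj => ?_⟩
    exact hz k (Finset.mem_erase.mpr ⟨hki, hk⟩) hkj

/-- Lemma 4.6: a two-bridge knot with reduced even continued fraction
`(2a_1, …, 2a_{2m})` has braid index `4` if and only if it is of type `4a`, `4b`,
`4c`, or `4d`. -/
theorem braid_index_eq_four_iff (m : ℕ) (hm : 1 ≤ m) (a : ℕ → ℤ)
    (ha : ∀ i < 2 * m, a i ≠ 0) :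
    braidB (2 * m) a = 4 ↔
      -- type 4a
      (∃ i₀ < 2 * m, |a i₀| = 3 ∧ (∀ i < 2 * m, i ≠ i₀ → |a i| = 1) ∧
        (∀ i < 2 * m - 1, a i * a (i + 1) < 0)) ∨
      -- type 4b
      (∃ i₀ < 2 * m, ∃ i₁ < 2 * m, i₀ ≠ i₁ ∧ |a i₀| = 2 ∧ |a i₁| = 2 ∧
        (∀ i < 2 * m, i ≠ i₀ → i ≠ i₁ → |a i| = 1) ∧
        (∀ i < 2 * m - 1, a i * a (i + 1) < 0)) ∨
      -- type 4c (possibly i₀ and i₁ refer to the same place)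
      (∃ i₀ < 2 * m, ∃ i₁ < 2 * m - 1, |a i₀| = 2 ∧
        (∀ i < 2 * m, i ≠ i₀ → |a i| = 1) ∧ 0 < a i₁ * a (i₁ + 1) ∧
        (∀ i < 2 * m - 1, i ≠ i₁ → a i * a (i + 1) < 0)) ∨
      -- type 4d
      ((∀ i < 2 * m, |a i| = 1) ∧
        ∃ i₀, ∃ i₁, i₀ < i₁ ∧ i₁ < 2 * m - 1 ∧
          0 < a i₀ * a (i₀ + 1) ∧ 0 < a i₁ * a (i₁ + 1) ∧
          (∀ i < 2 * m - 1, i ≠ i₀ → i ≠ i₁ → a i * a (i + 1) < 0)) := by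
  have hN : 2 ≤ 2 * m := by omega
  set f : ℕ → ℕ := fun i => (a i).natAbs - 1 with hf
  set S : ℕ := ∑ i ∈ Finset.range (2 * m), f i with hS
  set D : ℕ := ((Finset.range (2 * m - 1)).filter
      (fun i => ¬ a i * a (i + 1) < 0)).card with hD
  have habs : ∀ i < 2 * m, 1 ≤ (a i).natAbs := fun i hi =>
    Int.natAbs_pos.mpr (ha i hi)
  have habs_eq : ∀ j, ∀ c : ℕ, (a j).natAbs = c → |a j| = (c : ℤ) := by
    intro j c hc
    rw [Int.abs_eq_natAbs, hc]
  have habs_nat : ∀ j, ∀ c : ℕ, |a j| = (c : ℤ) → (a j).natAbs = c := by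
    intro j c hc
    rw [Int.abs_eq_natAbs] at hc
    exact_mod_cast hc
  -- the sum of absolute values
  have h1 : (∑ i ∈ Finset.range (2 * m), |a i|) = (S : ℤ) + 2 * m := by
    have e1 : (∑ i ∈ Finset.range (2 * m), |a i|)
        = ∑ i ∈ Finset.range (2 * m), ((f i : ℤ) + 1) := by
      refine Finset.sum_congr rfl fun i hi => ?_
      have hi' := Finset.mem_range.mp hi
      have := habs i hi'
      rw [Int.abs_eq_natAbs]
      have : (a i).natAbs = f i + 1 := by simp only [hf]; omega
      rw [this]
      push_cast
      ring
    rw [e1, Finset.sum_add_distrib, Finset.sum_const, Finset.card_range, hS]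
    push_cast [nsmul_eq_mul]
    ring
  -- sign changes and D
  have h2 : signChanges (2 * m) a + D = 2 * m - 1 := by
    rw [signChanges, hD]
    exact Finset.card_filter_add_card_filter_not _ |>.trans
      (Finset.card_range _)
  have key : braidB (2 * m) a = 4 ↔ S + D = 2 := by
    rw [braidB, h1]
    omega
  rw [key]
  -- positivity of products at non-sign-change places
  have hpos : ∀ i ∈ (Finset.range (2 * m - 1)).filter
      (fun i => ¬ a i * a (i + 1) < 0), 0 < a i * a (i + 1) := by
    intro i hi
    obtain ⟨hir, hnl⟩ := Finset.mem_filter.mp hi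
    have hir' := Finset.mem_range.mp hir
    have hne : a i * a (i + 1) ≠ 0 :=
      mul_ne_zero (ha i (by omega)) (ha (i + 1) (by omega))
    exact lt_of_le_of_ne (not_lt.mp hnl) (Ne.symm hne)
  constructor
  · intro h
    rcases (by omega : (S = 2 ∧ D = 0) ∨ (S = 1 ∧ D = 1) ∨ (S = 0 ∧ D = 2))
      with ⟨hS2, hD0⟩ | ⟨hS1, hD1⟩ | ⟨hS0, hD2⟩
    · -- all sign changes; total excess 2
      have hall : ∀ i < 2 * m - 1, a i * a (i + 1) < 0 := by
        intro i hi
        by_contra hc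
        have hmem : i ∈ (Finset.range (2 * m - 1)).filter
            (fun i => ¬ a i * a (i + 1) < 0) :=
          Finset.mem_filter.mpr ⟨Finset.mem_range.mpr hi, hc⟩
        rw [Finset.card_eq_zero.mp hD0] at hmem
        exact absurd hmem (Finset.notMem_empty i)
      rw [hS] at hS2
      rcases sum_eq_two_cases hS2 with
        ⟨i₀, hi₀, hfi₀, hz⟩ | ⟨i₀, hi₀, i₁, hi₁, hne, hfi₀, hfi₁, hz⟩
      · left
        have hi₀' := Finset.mem_range.mp hi₀
        refine ⟨i₀, hi₀', ?_, fun i hi hne => ?_, hall⟩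
        · exact habs_eq i₀ 3 (by have := habs i₀ hi₀'; simp only [hf] at hfi₀; omega)
        · have hzi := hz i (Finset.mem_range.mpr hi) hne
          have hge := habs i hi
          exact habs_eq i 1 (by simp only [hf] at hzi; omega)
      · right; left
        have hi₀' := Finset.mem_range.mp hi₀
        have hi₁' := Finset.mem_range.mp hi₁
        refine ⟨i₀, hi₀', i₁, hi₁', hne, ?_, ?_, fun i hi h0 h1 => ?_, hall⟩
        · exact habs_eq i₀ 2 (by have := habs i₀ hi₀'; simp only [hf] at hfi₀; omega)
        · exact habs_eq i₁ 2 (by have := habs i₁ hi₁'; simp only [hf] at hfi₁; omega)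
        · have hzi := hz i (Finset.mem_range.mpr hi) h0 h1
          have hge := habs i hi
          exact habs_eq i 1 (by simp only [hf] at hzi; omega)
    · -- type 4c
      right; right; left
      rw [hS] at hS1
      obtain ⟨i₀, hi₀, hfi₀, hz⟩ := sum_eq_one_cases hS1
      obtain ⟨i₁, hfil⟩ := Finset.card_eq_one.mp hD1
      have hi₀' := Finset.mem_range.mp hi₀
      have hmem : i₁ ∈ (Finset.range (2 * m - 1)).filter
          (fun i => ¬ a i * a (i + 1) < 0) := by
        rw [hfil]; exact Finset.mem_singleton_self i₁
      have hi₁' := Finset.mem_range.mp (Finset.mem_filter.mp hmem).1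
      refine ⟨i₀, hi₀', i₁, hi₁', ?_, fun i hi hne => ?_, hpos i₁ hmem,
        fun i hi hne => ?_⟩
      · exact habs_eq i₀ 2 (by have := habs i₀ hi₀'; simp only [hf] at hfi₀; omega)
      · have hzi := hz i (Finset.mem_range.mpr hi) hne
        have hge := habs i hi
        exact habs_eq i 1 (by simp only [hf] at hzi; omega)
      · by_contra hc
        have : i ∈ (Finset.range (2 * m - 1)).filter
            (fun i => ¬ a i * a (i + 1) < 0) :=
          Finset.mem_filter.mpr ⟨Finset.mem_range.mpr hi, hc⟩
        rw [hfil, Finset.mem_singleton] at this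
        exact hne this
    · -- type 4d
      right; right; right
      have hone : ∀ i < 2 * m, |a i| = 1 := by
        intro i hi
        rw [hS] at hS0
        have hz := Finset.sum_eq_zero_iff.mp hS0 i (Finset.mem_range.mpr hi)
        have hge := habs i hi
        exact habs_eq i 1 (by simp only [hf] at hz; omega)
      refine ⟨hone, ?_⟩
      obtain ⟨x, y, hxy, hfil⟩ := Finset.card_eq_two.mp hD2
      have keypair : ∀ u v : ℕ, u < v →
          (Finset.range (2 * m - 1)).filter (fun i => ¬ a i * a (i + 1) < 0)
            = {u, v} →
          ∃ i₀, ∃ i₁, i₀ < i₁ ∧ i₁ < 2 * m - 1 ∧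
            0 < a i₀ * a (i₀ + 1) ∧ 0 < a i₁ * a (i₁ + 1) ∧
            (∀ i < 2 * m - 1, i ≠ i₀ → i ≠ i₁ → a i * a (i + 1) < 0) := by
        intro u v huv hfil'
        have hmu : u ∈ (Finset.range (2 * m - 1)).filter
            (fun i => ¬ a i * a (i + 1) < 0) := by
          rw [hfil']; simp
        have hmv : v ∈ (Finset.range (2 * m - 1)).filter
            (fun i => ¬ a i * a (i + 1) < 0) := by
          rw [hfil']; simp
        refine ⟨u, v, huv, Finset.mem_range.mp (Finset.mem_filter.mp hmv).1,
          hpos u hmu, hpos v hmv, fun i hi h0 h1 => ?_⟩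
        by_contra hc
        have : i ∈ (Finset.range (2 * m - 1)).filter
            (fun i => ¬ a i * a (i + 1) < 0) :=
          Finset.mem_filter.mpr ⟨Finset.mem_range.mpr hi, hc⟩
        rw [hfil', Finset.mem_insert, Finset.mem_singleton] at this
        tauto
      rcases lt_or_gt_of_ne hxy with hlt | hgt
      · exact keypair x y hlt hfil
      · exact keypair y x hgt (by rw [hfil, Finset.pair_comm])
  · intro h
    have hSDeq : S + D = 2 → S + D = 2 := id
    rcases h with ⟨i₀, hi₀, h3, hrest, hneg⟩ |
      ⟨i₀, hi₀, i₁, hi₁, hne, h20, h21, hrest, hneg⟩ |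
      ⟨i₀, hi₀, i₁, hi₁, h2, hrest, hposp, hneg⟩ |
      ⟨hone, i₀, i₁, hlt, hi₁, hp0, hp1, hneg⟩
    · -- 4a : S = 2, D = 0
      have hSv : S = 2 := by
        rw [hS, Finset.sum_eq_single_of_mem i₀ (Finset.mem_range.mpr hi₀)
          (fun j hj hji => ?_)]
        · have := habs_nat i₀ 3 h3
          simp only [hf]; omega
        · have := habs_nat j 1 (hrest j (Finset.mem_range.mp hj) hji)
          simp only [hf]; omega
      have hDv : D = 0 := by
        rw [hD, Finset.card_eq_zero, Finset.filter_eq_empty_iff]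
        intro i hi
        exact not_not_intro (hneg i (Finset.mem_range.mp hi))
      omega
    · -- 4b : S = 2, D = 0
      have hSv : S = 2 := by
        rw [hS, Finset.sum_eq_add_of_mem i₀ i₁ (Finset.mem_range.mpr hi₀)
          (Finset.mem_range.mpr hi₁) hne (fun k hk hkne => ?_)]
        · have e0 := habs_nat i₀ 2 h20
          have e1 := habs_nat i₁ 2 h21
          simp only [hf]; omega
        · have := habs_nat k 1 (hrest k (Finset.mem_range.mp hk) hkne.1 hkne.2)
          simp only [hf]; omega
      have hDv : D = 0 := by
        rw [hD, Finset.card_eq_zero, Finset.filter_eq_empty_iff]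
        intro i hi
        exact not_not_intro (hneg i (Finset.mem_range.mp hi))
      omega
    · -- 4c : S = 1, D = 1
      have hSv : S = 1 := by
        rw [hS, Finset.sum_eq_single_of_mem i₀ (Finset.mem_range.mpr hi₀)
          (fun j hj hji => ?_)]
        · have := habs_nat i₀ 2 h2
          simp only [hf]; omega
        · have := habs_nat j 1 (hrest j (Finset.mem_range.mp hj) hji)
          simp only [hf]; omega
      have hDv : D = 1 := by
        rw [hD]
        have : (Finset.range (2 * m - 1)).filter
            (fun i => ¬ a i * a (i + 1) < 0) = {i₁} := by
          ext i
          simp only [Finset.mem_filter, Finset.mem_range, Finset.mem_singleton]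
          constructor
          · rintro ⟨hir, hnl⟩
            by_contra hc
            exact hnl (hneg i hir hc)
          · rintro rfl
            exact ⟨hi₁, not_lt.mpr (le_of_lt hposp)⟩
        rw [this, Finset.card_singleton]
      omega
    · -- 4d : S = 0, D = 2
      have hSv : S = 0 := by
        rw [hS]
        refine Finset.sum_eq_zero fun i hi => ?_
        have := habs_nat i 1 (hone i (Finset.mem_range.mp hi))
        simp only [hf]; omega
      have hDv : D = 2 := by
        rw [hD]
        have : (Finset.range (2 * m - 1)).filter
            (fun i => ¬ a i * a (i + 1) < 0) = {i₀, i₁} := by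
          ext i
          simp only [Finset.mem_filter, Finset.mem_range, Finset.mem_insert,
            Finset.mem_singleton]
          constructor
          · rintro ⟨hir, hnl⟩
            by_contra hc
            push_neg at hc
            exact hnl (hneg i hir hc.1 hc.2)
          · rintro (rfl | rfl)
            · exact ⟨by omega, not_lt.mpr (le_of_lt hp0)⟩
            · exact ⟨hi₁, not_lt.mpr (le_of_lt hp1)⟩
        rw [this, Finset.card_pair (Nat.ne_of_lt hlt)]
      omega
end
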